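/- There exists a simple polygon P in the Euclidean plane whose vertices have pairwise geodesic distance at least 1, such that every vertex guard set of P contains two distinct guards g, h with geodesic distance δ(g,h) at most 2; that is, no vertex guard set of P has dispersion distance greater than 2. -/

import Mathlib

open Set Metric
open scoped ENNReal

noncomputable section

/-- The Euclidean plane. -/
abbrev Plane : Type := EuclideanSpace ℝ (Fin 2)

/-- A *simple polygon*: the compact region of the plane bounded by a simple
closed polygonal curve, together with the cyclic sequence of vertices of that
curve.  The field `carrier` is the region (boundary included); the field
`frontier_eq` states that the topological boundary of the region is exactly
the closed polygonal curve through the vertices, and the fields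
`edges_adjacent`/`edges_disjoint` state that this curve is simple. -/
structure SimplePolygon where
  /-- the number of vertices -/
  n : ℕ
  /-- a polygon has at least three vertices -/
  three_le : 3 ≤ n
  /-- the vertices, in cyclic order along the boundary curve -/
  vertex : ZMod n → Plane
  /-- the compact region bounded by the polygonal curve -/
  carrier : Set Plane
  isCompact : IsCompact carrier
  isConnected : IsConnected carrier
  /-- the region is the closure of its interior (it is a genuine
  two-dimensional region) -/
  regular : carrier = closure (interior carrier)
  /-- the topological boundary of the region is the union of the edges of the
  closed polygonal curve through the vertices -/
  frontier_eq : frontier carrier = ⋃ i : ZMod n, segment ℝ (vertex i) (vertex (i + 1))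
  /-- the vertices are pairwise distinct -/
  vertex_injective : Function.Injective vertex
  /-- consecutive edges of the curve meet exactly in their common vertex -/
  edges_adjacent : ∀ i : ZMod n,
    segment ℝ (vertex i) (vertex (i + 1)) ∩ segment ℝ (vertex (i + 1)) (vertex (i + 2)) =
      {vertex (i + 1)}
  /-- non-adjacent edges of the curve are disjoint -/
  edges_disjoint : ∀ i j : ZMod n, i ≠ j → i + 1 ≠ j → j + 1 ≠ i →
    Disjoint (segment ℝ (vertex i) (vertex (i + 1))) (segment ℝ (vertex j) (vertex (j + 1)))

/-- The geodesic distance between `p` and `q` inside the set `P`: the infimum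
of the lengths (total variations) of continuous paths from `p` to `q` staying
in `P`.  (Non-rectifiable paths have length `∞` and hence do not contribute.) -/
def geodesicDist (P : Set Plane) (p q : Plane) : ℝ≥0∞ :=
  ⨅ (γ : ℝ → Plane) (_ : ContinuousOn γ (Icc 0 1)) (_ : γ 0 = p) (_ : γ 1 = q)
    (_ : MapsTo γ (Icc 0 1) P), eVariationOn γ (Icc 0 1)

/-- `p` sees `q` within `P` if the closed segment `[p,q]` is contained in `P`. -/
def Sees (P : Set Plane) (p q : Plane) : Prop :=
  segment ℝ p q ⊆ P

/-- `G` is a guard set for `P` if `G ⊆ P` and every point of `P` is seen by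
some point of `G`. -/
def IsGuardSet (P : Set Plane) (G : Set Plane) : Prop :=
  G ⊆ P ∧ ∀ x ∈ P, ∃ g ∈ G, Sees P g x

/-- A vertex guard set of a simple polygon: a guard set consisting of
vertices of the polygon. -/
def SimplePolygon.IsVertexGuardSet (P : SimplePolygon) (G : Set Plane) : Prop :=
  G ⊆ Set.range P.vertex ∧ IsGuardSet P.carrier G

/-- The dispersion distance of a guard set `G` in `P`: the infimum of the
geodesic distances between pairs of distinct guards. -/
def dispersionDist (P : Set Plane) (G : Set Plane) : ℝ≥0∞ :=
  ⨅ (g : Plane) (_ : g ∈ G) (h : Plane) (_ : h ∈ G) (_ : g ≠ h), geodesicDist P g h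

/-- The vertex `P.vertex i` is *reflex* (interior angle strictly greater than
`180°`): sufficiently close to the vertex, the segment joining a point of the
incoming edge to a point of the outgoing edge (both distinct from the vertex)
always leaves the polygon. -/
def SimplePolygon.IsReflexAt (P : SimplePolygon) (i : ZMod P.n) : Prop :=
  ∃ δ > (0 : ℝ), ∀ a ∈ segment ℝ (P.vertex (i - 1)) (P.vertex i),
    ∀ c ∈ segment ℝ (P.vertex i) (P.vertex (i + 1)),
      a ≠ P.vertex i → c ≠ P.vertex i →
      dist a (P.vertex i) < δ → dist c (P.vertex i) < δ →
      ¬ segment ℝ a c ⊆ P.carrier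

/-- The vertices of `P` are labeled in counterclockwise order: the shoelace
signed area of the vertex cycle is positive. -/
def SimplePolygon.IsCCW (P : SimplePolygon) : Prop :=
  0 < ∑ i ∈ Finset.range P.n,
    (P.vertex (i : ZMod P.n) 0 * P.vertex ((i : ZMod P.n) + 1) 1 -
      P.vertex ((i : ZMod P.n) + 1) 0 * P.vertex (i : ZMod P.n) 1)

namespace DispAux

def pt (x y : ℝ) : Plane := WithLp.toLp 2 ![x, y]

def rt3 : ℝ := Real.sqrt 3

lemma rt3_sq : rt3 ^ 2 = 3 := Real.sq_sqrt (by norm_num)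
lemma rt3_pos : 0 < rt3 := Real.sqrt_pos.mpr (by norm_num)
lemma rt3_gt : 1.7 < rt3 := by nlinarith [rt3_sq, rt3_pos]
lemma rt3_lt : rt3 < 1.8 := by nlinarith [rt3_sq, rt3_pos]

def base : Set Plane := {p | -1 ≤ p 0 ∧ p 0 ≤ 4 ∧ -1 ≤ p 1 ∧ p 1 ≤ 0}
def tooth (k : ℝ) : Set Plane :=
  {p | 0 ≤ p 1 ∧ p 1 ≤ rt3 * (p 0 - k) ∧ p 1 ≤ rt3 * (k + 1 - p 0)}
def poly : Set Plane := base ∪ (tooth 0 ∪ (tooth 1 ∪ tooth 2))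

lemma mem_base {p : Plane} : p ∈ base ↔ -1 ≤ p 0 ∧ p 0 ≤ 4 ∧ -1 ≤ p 1 ∧ p 1 ≤ 0 := Iff.rfl
lemma mem_tooth {k : ℝ} {p : Plane} :
    p ∈ tooth k ↔ 0 ≤ p 1 ∧ p 1 ≤ rt3 * (p 0 - k) ∧ p 1 ≤ rt3 * (k + 1 - p 0) := Iff.rfl

lemma pt0 (x y : ℝ) : pt x y 0 = x := rfl
lemma pt1 (x y : ℝ) : pt x y 1 = y := rfl

lemma convex_base : Convex ℝ base := by
  intro x hx y hy a b ha hb hab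
  obtain ⟨h1,h2,h3,h4⟩ := hx; obtain ⟨g1,g2,g3,g4⟩ := hy
  have e0 : (a • x + b • y) 0 = a * x 0 + b * y 0 := rfl
  have e1 : (a • x + b • y) 1 = a * x 1 + b * y 1 := rfl
  refine ⟨?_, ?_, ?_, ?_⟩
  · rw [e0]; nlinarith
  · rw [e0]; nlinarith
  · rw [e1]; nlinarith
  · rw [e1]; nlinarith

lemma convex_tooth (k : ℝ) : Convex ℝ (tooth k) := by
  intro x hx y hy a b ha hb hab
  obtain ⟨h1,h2,h3⟩ := hx; obtain ⟨g1,g2,g3⟩ := hy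
  have e0 : (a • x + b • y) 0 = a * x 0 + b * y 0 := rfl
  have e1 : (a • x + b • y) 1 = a * x 1 + b * y 1 := rfl
  refine ⟨?_, ?_, ?_⟩
  · rw [e1]; nlinarith
  · rw [e1, e0]
    have key : a*(rt3*(x 0 - k)) + b*(rt3*(y 0 - k)) = rt3*(a*(x 0)+b*(y 0)-k) := by
      linear_combination (-(rt3*k)) * hab
    nlinarith [mul_le_mul_of_nonneg_left h2 ha, mul_le_mul_of_nonneg_left g2 hb]
  · rw [e1, e0]
    have key : a*(rt3*(k + 1 - x 0)) + b*(rt3*(k + 1 - y 0)) = rt3*(k+1-(a*(x 0)+b*(y 0))) := by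
      linear_combination (rt3*(k+1)) * hab
    nlinarith [mul_le_mul_of_nonneg_left h3 ha, mul_le_mul_of_nonneg_left g3 hb]

lemma cont0 : Continuous fun p : Plane => p 0 := (EuclideanSpace.proj (0:Fin 2)).continuous
lemma cont1 : Continuous fun p : Plane => p 1 := (EuclideanSpace.proj (1:Fin 2)).continuous

lemma isClosed_base : IsClosed base := by
  unfold base
  simp only [setOf_and]
  exact ((isClosed_le continuous_const cont0).inter ((isClosed_le cont0 continuous_const).inter
    ((isClosed_le continuous_const cont1).inter (isClosed_le cont1 continuous_const))))

lemma isClosed_tooth (k : ℝ) : IsClosed (tooth k) := by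
  unfold tooth
  simp only [setOf_and]
  exact ((isClosed_le continuous_const cont1).inter
    ((isClosed_le cont1 (continuous_const.mul (cont0.sub continuous_const))).inter
     (isClosed_le cont1 (continuous_const.mul (continuous_const.sub cont0)))))

lemma isClosed_poly : IsClosed poly :=
  (isClosed_base.union ((isClosed_tooth 0).union ((isClosed_tooth 1).union (isClosed_tooth 2))))

lemma poly_bounds {p : Plane} (hp : p ∈ poly) :
    -1 ≤ p 0 ∧ p 0 ≤ 4 ∧ -1 ≤ p 1 ∧ p 1 ≤ 1 := by
  have h3 := rt3_lt; have h2 := rt3_gt; have hpos := rt3_pos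
  rcases hp with h | h | h | h <;>
    [ (exact ⟨h.1, h.2.1, h.2.2.1, by linarith [h.2.2.2]⟩);
      (obtain ⟨a,b,c⟩ := h; constructor; · nlinarith
       refine ⟨by nlinarith, by linarith, by nlinarith⟩);
      (obtain ⟨a,b,c⟩ := h; constructor; · nlinarith
       refine ⟨by nlinarith, by linarith, by nlinarith⟩);
      (obtain ⟨a,b,c⟩ := h; constructor; · nlinarith
       refine ⟨by nlinarith, by linarith, by nlinarith⟩)]

lemma isCompact_poly : IsCompact poly := by
  refine (isCompact_closedBall (0:Plane) 5).of_isClosed_subset isClosed_poly ?_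
  intro p hp
  obtain ⟨h1,h2,h3,h4⟩ := poly_bounds hp
  have : dist p 0 = Real.sqrt ((p 0 - 0)^2 + (p 1 - 0)^2) := by
    rw [EuclideanSpace.dist_eq]; congr 1; rw [Fin.sum_univ_two]
    simp [Real.dist_eq, sq_abs]
  rw [mem_closedBall, this]
  rw [show (5:ℝ) = Real.sqrt 25 by
    rw [show (25:ℝ) = 5^2 by norm_num, Real.sqrt_sq]; norm_num]
  apply Real.sqrt_le_sqrt; nlinarith

lemma isConnected_poly : IsConnected poly := by
  have hb : IsConnected base :=
    (convex_base.isPathConnected ⟨pt 0 0, by rw [mem_base]; norm_num [pt]⟩).isConnected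
  have ht : ∀ k : ℝ, IsConnected (tooth k) := fun k =>
    ((convex_tooth k).isPathConnected ⟨pt (k+1/2) 0, by
      rw [mem_tooth]
      refine ⟨le_of_eq (pt1 _ _).symm, ?_, ?_⟩ <;> rw [pt0, pt1] <;> nlinarith [rt3_pos]⟩).isConnected
  have h01 : IsConnected (base ∪ tooth 0) := IsConnected.union ⟨pt (1/2) 0, by
      constructor
      · rw [mem_base]; simp only [pt0, pt1]; norm_num
      · rw [mem_tooth]; simp only [pt0, pt1]
        refine ⟨le_refl _, ?_, ?_⟩ <;> nlinarith [rt3_pos]⟩ hb (ht 0)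
  have h012 : IsConnected ((base ∪ tooth 0) ∪ tooth 1) := IsConnected.union ⟨pt (3/2) 0, by
      constructor
      · left; rw [mem_base]; simp only [pt0, pt1]; norm_num
      · rw [mem_tooth]; simp only [pt0, pt1]
        refine ⟨le_refl _, ?_, ?_⟩ <;> nlinarith [rt3_pos]⟩ h01 (ht 1)
  have h0123 : IsConnected (((base ∪ tooth 0) ∪ tooth 1) ∪ tooth 2) := IsConnected.union ⟨pt (5/2) 0, by
      constructor
      · left; left; rw [mem_base]; simp only [pt0, pt1]; norm_num
      · rw [mem_tooth]; simp only [pt0, pt1]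
        refine ⟨le_refl _, ?_, ?_⟩ <;> nlinarith [rt3_pos]⟩ h012 (ht 2)
  have : poly = ((base ∪ tooth 0) ∪ tooth 1) ∪ tooth 2 := by
    unfold poly; rw [union_assoc, union_assoc]
  rw [this]; exact h0123

/-! ### interior helpers -/

lemma mem_interior_of_open {s U : Set Plane} (hU : IsOpen U) (hsub : U ⊆ s) {p : Plane}
    (hp : p ∈ U) : p ∈ interior s := interior_maximal hsub hU hp

def obox : Set Plane := {p | -1 < p 0 ∧ p 0 < 4 ∧ -1 < p 1 ∧ p 1 < 0}
def otooth (k : ℝ) : Set Plane :=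
  {p | 0 < p 1 ∧ p 1 < rt3 * (p 0 - k) ∧ p 1 < rt3 * (k + 1 - p 0)}
def omouth (k : ℝ) : Set Plane :=
  {p | k < p 0 ∧ p 0 < k + 1 ∧ -1 < p 1 ∧ p 1 < rt3 * (p 0 - k) ∧ p 1 < rt3 * (k + 1 - p 0)}

lemma isOpen_obox : IsOpen obox := by
  unfold obox; simp only [setOf_and]
  exact ((isOpen_lt continuous_const cont0).inter ((isOpen_lt cont0 continuous_const).inter
    ((isOpen_lt continuous_const cont1).inter (isOpen_lt cont1 continuous_const))))

lemma isOpen_otooth (k : ℝ) : IsOpen (otooth k) := by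
  unfold otooth; simp only [setOf_and]
  exact ((isOpen_lt continuous_const cont1).inter
    ((isOpen_lt cont1 (continuous_const.mul (cont0.sub continuous_const))).inter
     (isOpen_lt cont1 (continuous_const.mul (continuous_const.sub cont0)))))

lemma isOpen_omouth (k : ℝ) : IsOpen (omouth k) := by
  unfold omouth; simp only [setOf_and]
  exact ((isOpen_lt continuous_const cont0).inter ((isOpen_lt cont0 continuous_const).inter
    ((isOpen_lt continuous_const cont1).inter
    ((isOpen_lt cont1 (continuous_const.mul (cont0.sub continuous_const))).inter
     (isOpen_lt cont1 (continuous_const.mul (continuous_const.sub cont0)))))))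

lemma obox_sub : obox ⊆ poly := fun p hp => Or.inl ⟨hp.1.le, hp.2.1.le, hp.2.2.1.le, hp.2.2.2.le⟩

lemma otooth_sub_tooth (k : ℝ) : otooth k ⊆ tooth k :=
  fun p hp => ⟨hp.1.le, hp.2.1.le, hp.2.2.le⟩

lemma tooth0_sub : tooth 0 ⊆ poly := fun p hp => Or.inr (Or.inl hp)
lemma tooth1_sub : tooth 1 ⊆ poly := fun p hp => Or.inr (Or.inr (Or.inl hp))
lemma tooth2_sub : tooth 2 ⊆ poly := fun p hp => Or.inr (Or.inr (Or.inr hp))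

lemma omouth_sub {k : ℝ} (hk0 : 0 ≤ k) (hk3 : k + 1 ≤ 3) (hsub : tooth k ⊆ poly) :
    omouth k ⊆ poly := by
  intro p hp
  obtain ⟨a1, a2, a3, a4, a5⟩ := hp
  rcases le_or_gt (p 1) 0 with h | h
  · exact Or.inl ⟨by linarith, by linarith, a3.le, h⟩
  · exact hsub ⟨h.le, a4.le, a5.le⟩

/-! ### regularity -/

lemma subset_closure_interior {s : Set Plane} (hs : Convex ℝ s) {z : Plane}
    (hz : z ∈ interior s) : s ⊆ closure (interior s) := by
  intro p hp
  have hc : Continuous fun t : ℝ => t • z + (1 - t) • p := by continuity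
  have h0 : (fun t : ℝ => t • z + (1 - t) • p) 0 = p := by simp
  have htd : Filter.Tendsto (fun t : ℝ => t • z + (1 - t) • p) (nhdsWithin 0 (Ioi 0)) (nhds p) := by
    have h2 := (hc.tendsto 0).mono_left (nhdsWithin_le_nhds (s := Ioi (0:ℝ)))
    rw [show (0:ℝ) • z + ((1:ℝ) - 0) • p = p by simp] at h2
    exact h2
  refine mem_closure_of_tendsto htd ?_
  filter_upwards [Ioo_mem_nhdsGT_of_mem (by norm_num : (0:ℝ) ∈ Ico (0:ℝ) 1)] with t ht
  exact hs.combo_interior_self_mem_interior hz hp ht.1 (by linarith [ht.2]) (by ring)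

lemma int_base : pt 0 (-1/2) ∈ interior base := by
  apply mem_interior_of_open isOpen_obox
    (fun p (hp : p ∈ obox) => (⟨hp.1.le, hp.2.1.le, hp.2.2.1.le, hp.2.2.2.le⟩ : p ∈ base))
  show _ < _ ∧ _
  simp only [pt0, pt1]; norm_num

lemma int_tooth (k : ℝ) : pt (k + 1/2) (1/2) ∈ interior (tooth k) := by
  apply mem_interior_of_open (isOpen_otooth k) (otooth_sub_tooth k)
  show _ < _ ∧ _
  simp only [pt0, pt1]
  refine ⟨by norm_num, ?_, ?_⟩ <;> nlinarith [rt3_gt]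

lemma regular_poly : poly = closure (interior poly) := by
  apply Subset.antisymm
  · have hmono : ∀ s : Set Plane, s ⊆ poly → closure (interior s) ⊆ closure (interior poly) :=
      fun s hs => closure_mono (interior_mono hs)
    rintro p (hp | hp | hp | hp)
    · exact hmono base (fun q hq => Or.inl hq) (subset_closure_interior convex_base int_base hp)
    · exact hmono (tooth 0) tooth0_sub (subset_closure_interior (convex_tooth 0) (int_tooth 0) hp)
    · exact hmono (tooth 1) tooth1_sub (subset_closure_interior (convex_tooth 1) (int_tooth 1) hp)
    · exact hmono (tooth 2) tooth2_sub (subset_closure_interior (convex_tooth 2) (int_tooth 2) hp)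
  · exact closure_minimal interior_subset isClosed_poly


/-! ### vertices and edges -/

def vdata : Fin 11 → Plane :=
  ![pt (-1) (-1), pt 4 (-1), pt 4 0, pt 3 0, pt (5/2) (rt3 / 2), pt 2 0,
    pt (3/2) (rt3 / 2), pt 1 0, pt (1/2) (rt3 / 2), pt 0 0, pt (-1) 0]

def vert (i : ZMod 11) : Plane := vdata ⟨i.val, i.val_lt⟩

def E : Set Plane := ⋃ i : ZMod 11, segment ℝ (vert i) (vert (i + 1))

lemma vert0 : vert 0 = pt (-1) (-1) := rfl
lemma vert1 : vert 1 = pt 4 (-1) := rfl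
lemma vert2 : vert 2 = pt 4 0 := rfl
lemma vert3 : vert 3 = pt 3 0 := rfl
lemma vert4 : vert 4 = pt (5/2) (rt3/2) := rfl
lemma vert5 : vert 5 = pt 2 0 := rfl
lemma vert6 : vert 6 = pt (3/2) (rt3/2) := rfl
lemma vert7 : vert 7 = pt 1 0 := rfl
lemma vert8 : vert 8 = pt (1/2) (rt3/2) := rfl
lemma vert9 : vert 9 = pt 0 0 := rfl
lemma vert10 : vert 10 = pt (-1) 0 := rfl

lemma zmod11_cases : ∀ i : ZMod 11, i = 0 ∨ i = 1 ∨ i = 2 ∨ i = 3 ∨ i = 4 ∨ i = 5 ∨ i = 6 ∨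
    i = 7 ∨ i = 8 ∨ i = 9 ∨ i = 10 := by decide

lemma mem_segment_pt' (P Q z : Plane) (t : ℝ) (h0 : 0 ≤ t) (h1 : t ≤ 1)
    (hx : z 0 = (1-t) * P 0 + t * Q 0) (hy : z 1 = (1-t) * P 1 + t * Q 1) :
    z ∈ segment ℝ P Q := by
  refine ⟨1-t, t, by linarith, h0, by ring, ?_⟩
  ext i
  fin_cases i
  · show (1-t) * P 0 + t * Q 0 = z 0
    rw [hx]
  · show (1-t) * P 1 + t * Q 1 = z 1
    rw [hy]

lemma seg_coord {P Q z : Plane} (h : z ∈ segment ℝ P Q) :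
    ∃ t, 0 ≤ t ∧ t ≤ 1 ∧ z 0 = (1-t) * P 0 + t * Q 0 ∧ z 1 = (1-t) * P 1 + t * Q 1 := by
  obtain ⟨u, v, hu, hv, huv, rfl⟩ := h
  have h1 : u = 1 - v := by linarith
  exact ⟨v, hv, by linarith, by show u * P 0 + v * Q 0 = _; rw [h1], by
    show u * P 1 + v * Q 1 = _; rw [h1]⟩

/-- membership facts for the endpoints -/
lemma vmem_base0 : vert 0 ∈ base := by rw [mem_base, vert0]; simp only [pt0, pt1]; norm_num
lemma vmem_base1 : vert 1 ∈ base := by rw [mem_base, vert1]; simp only [pt0, pt1]; norm_num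
lemma vmem_base2 : vert 2 ∈ base := by rw [mem_base, vert2]; simp only [pt0, pt1]; norm_num
lemma vmem_base3 : vert 3 ∈ base := by rw [mem_base, vert3]; simp only [pt0, pt1]; norm_num
lemma vmem_base9 : vert 9 ∈ base := by rw [mem_base, vert9]; simp only [pt0, pt1]; norm_num
lemma vmem_base10 : vert 10 ∈ base := by rw [mem_base, vert10]; simp only [pt0, pt1]; norm_num

lemma mouthL_mem (k : ℝ) : pt k 0 ∈ tooth k := by
  rw [mem_tooth]; simp only [pt0, pt1]
  exact ⟨le_refl _, by nlinarith [rt3_pos], by nlinarith [rt3_pos]⟩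
lemma mouthR_mem (k : ℝ) : pt (k+1) 0 ∈ tooth k := by
  rw [mem_tooth]; simp only [pt0, pt1]
  exact ⟨le_refl _, by nlinarith [rt3_pos], by nlinarith [rt3_pos]⟩
lemma apex_mem (k : ℝ) : pt (k + 1/2) (rt3/2) ∈ tooth k := by
  rw [mem_tooth]; simp only [pt0, pt1]
  refine ⟨by nlinarith [rt3_pos], ?_, ?_⟩ <;> nlinarith [rt3_pos]

lemma vmem_tooth3 : vert 3 ∈ tooth 2 := by
  rw [vert3]
  have := mouthR_mem 2; norm_num at this; exact this
lemma vmem_tooth4 : vert 4 ∈ tooth 2 := by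
  rw [vert4]
  have := apex_mem 2; norm_num at this; exact this
lemma vmem_tooth5 : vert 5 ∈ tooth 2 := by
  rw [vert5]
  have := mouthL_mem 2; norm_num at this; exact this
lemma vmem_tooth5' : vert 5 ∈ tooth 1 := by
  rw [vert5]
  have := mouthR_mem 1; norm_num at this; exact this
lemma vmem_tooth6 : vert 6 ∈ tooth 1 := by
  rw [vert6]
  have := apex_mem 1; norm_num at this; exact this
lemma vmem_tooth7 : vert 7 ∈ tooth 1 := by
  rw [vert7]
  have := mouthL_mem 1; norm_num at this; exact this
lemma vmem_tooth7' : vert 7 ∈ tooth 0 := by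
  rw [vert7]
  have := mouthR_mem 0; norm_num at this; exact this
lemma vmem_tooth8 : vert 8 ∈ tooth 0 := by
  rw [vert8]
  have := apex_mem 0; norm_num at this; exact this
lemma vmem_tooth9 : vert 9 ∈ tooth 0 := by
  rw [vert9]
  have := mouthL_mem 0; norm_num at this; exact this

lemma E_subset_poly : E ⊆ poly := by
  intro p hp
  rw [E, mem_iUnion] at hp
  obtain ⟨i, hi⟩ := hp
  rcases zmod11_cases i with rfl|rfl|rfl|rfl|rfl|rfl|rfl|rfl|rfl|rfl|rfl
  · exact Or.inl (convex_base.segment_subset vmem_base0 vmem_base1 hi)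
  · exact Or.inl (convex_base.segment_subset vmem_base1 vmem_base2 hi)
  · exact Or.inl (convex_base.segment_subset vmem_base2 vmem_base3 hi)
  · exact tooth2_sub ((convex_tooth 2).segment_subset vmem_tooth3 vmem_tooth4 hi)
  · exact tooth2_sub ((convex_tooth 2).segment_subset vmem_tooth4 vmem_tooth5 hi)
  · exact tooth1_sub ((convex_tooth 1).segment_subset vmem_tooth5' vmem_tooth6 hi)
  · exact tooth1_sub ((convex_tooth 1).segment_subset vmem_tooth6 vmem_tooth7 hi)
  · exact tooth0_sub ((convex_tooth 0).segment_subset vmem_tooth7' vmem_tooth8 hi)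
  · exact tooth0_sub ((convex_tooth 0).segment_subset vmem_tooth8 vmem_tooth9 hi)
  · exact Or.inl (convex_base.segment_subset vmem_base9 vmem_base10 hi)
  · exact Or.inl (convex_base.segment_subset vmem_base10 vmem_base0 hi)


/-! ### frontier -/

lemma rt3_le {a b : ℝ} (h : rt3 * a ≤ rt3 * b) : a ≤ b := by nlinarith [rt3_pos]
lemma rt3_pos' {a : ℝ} (h : 0 < rt3 * a) : 0 < a := by nlinarith [rt3_pos]
lemma rt3_nonneg' {a : ℝ} (h : 0 ≤ rt3 * a) : 0 ≤ a := by nlinarith [rt3_pos]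

lemma not_mem_interior {p : Plane} (u : Plane) (H : ∀ t : ℝ, 0 < t → p + t • u ∉ poly) :
    p ∉ interior poly := by
  intro hp
  have hc : Continuous fun t : ℝ => p + t • u := by continuity
  have hev : ∀ᶠ t in nhds (0:ℝ), p + t • u ∈ interior poly := by
    have h2 := hc.tendsto 0
    rw [show p + (0:ℝ) • u = p by simp] at h2
    exact h2.eventually (isOpen_interior.eventually_mem hp)
  obtain ⟨t, htmem, htpos⟩ :=
    ((hev.filter_mono nhdsWithin_le_nhds).and self_mem_nhdsWithin).exists
      (f := nhdsWithin (0:ℝ) (Ioi 0))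
  exact H t htpos (interior_subset htmem)

lemma not_in_poly_down {q : Plane} {t : ℝ} (hq1 : q 1 = -1 - t) (ht : 0 < t) : q ∉ poly := by
  rintro (hb | h | h | h)
  · have := hb.2.2.1; linarith
  all_goals (have := h.1; linarith)

lemma not_in_poly_right {q : Plane} {t : ℝ} (hq0 : q 0 = 4 + t) (ht : 0 < t) : q ∉ poly := by
  rintro (hb | h | h | h)
  · have := hb.2.1; linarith
  all_goals (obtain ⟨a1, _, a3⟩ := h; rw [hq0] at a3; nlinarith [rt3_pos])

lemma not_in_poly_left {q : Plane} {t : ℝ} (hq0 : q 0 = -1 - t) (ht : 0 < t) : q ∉ poly := by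
  rintro (hb | h | h | h)
  · have := hb.1; linarith
  all_goals (obtain ⟨a1, a2, _⟩ := h; rw [hq0] at a2; nlinarith [rt3_pos])

lemma not_in_poly_up {q : Plane} {x y t : ℝ} (hq0 : q 0 = x) (hq1 : q 1 = y + t)
    (hy : 0 ≤ y) (ht : 0 < t)
    (h0 : rt3 * (x - 0) ≤ y ∨ rt3 * (0 + 1 - x) ≤ y)
    (h1 : rt3 * (x - 1) ≤ y ∨ rt3 * (1 + 1 - x) ≤ y)
    (h2 : rt3 * (x - 2) ≤ y ∨ rt3 * (2 + 1 - x) ≤ y) : q ∉ poly := by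
  rintro (hb | h | h | h)
  · have := hb.2.2.2; linarith
  · obtain ⟨_, a2, a3⟩ := h; rw [hq0, hq1] at a2 a3; rcases h0 with h | h <;> linarith
  · obtain ⟨_, a2, a3⟩ := h; rw [hq0, hq1] at a2 a3; rcases h1 with h | h <;> linarith
  · obtain ⟨_, a2, a3⟩ := h; rw [hq0, hq1] at a2 a3; rcases h2 with h | h <;> linarith

lemma poly_sub_int_E : poly ⊆ interior poly ∪ E := by
  intro p hp
  have hrt := rt3_pos
  rcases lt_trichotomy (p 1) 0 with hy | hy | hy
  · -- below the mouths: p ∈ base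
    have hb : p ∈ base := by
      rcases hp with h | h | h | h
      · exact h
      all_goals exact absurd h.1 (not_le.mpr hy)
    obtain ⟨hx1, hx2, hy1, _⟩ := hb
    rcases eq_or_lt_of_le hx1 with he | hlt
    · refine Or.inr (mem_iUnion.mpr ⟨10, mem_segment_pt' _ _ _ (-(p 1))
        (by linarith) (by linarith) ?_ ?_⟩)
      · show p 0 = (1 - -(p 1)) * (-1) + (-(p 1)) * (-1); rw [← he]; ring
      · show p 1 = (1 - -(p 1)) * 0 + (-(p 1)) * (-1); ring
    rcases eq_or_lt_of_le hx2 with he | hlt2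
    · refine Or.inr (mem_iUnion.mpr ⟨1, mem_segment_pt' _ _ _ (p 1 + 1)
        (by linarith) (by linarith) ?_ ?_⟩)
      · show p 0 = (1 - (p 1 + 1)) * 4 + (p 1 + 1) * 4; rw [he]; ring
      · show p 1 = (1 - (p 1 + 1)) * (-1) + (p 1 + 1) * 0; ring
    rcases eq_or_lt_of_le hy1 with he | hlt3
    · refine Or.inr (mem_iUnion.mpr ⟨0, mem_segment_pt' _ _ _ ((p 0 + 1)/5)
        (by linarith) (by linarith) ?_ ?_⟩)
      · show p 0 = (1 - (p 0 + 1)/5) * (-1) + ((p 0 + 1)/5) * 4; ring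
      · show p 1 = (1 - (p 0 + 1)/5) * (-1) + ((p 0 + 1)/5) * (-1); rw [← he]; ring
    · exact Or.inl (mem_interior_of_open isOpen_obox obox_sub ⟨hlt, hlt2, hlt3, hy⟩)
  · -- on the line y = 0
    have hx14 : -1 ≤ p 0 ∧ p 0 ≤ 4 := by
      rcases hp with h | h | h | h
      · exact ⟨h.1, h.2.1⟩
      all_goals {
        obtain ⟨_, a2, a3⟩ := h
        rw [hy] at a2 a3
        have b1 := rt3_nonneg' a2
        have b2 := rt3_nonneg' a3
        constructor <;> linarith }
    obtain ⟨hx1, hx2⟩ := hx14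
    rcases le_or_gt (p 0) 0 with h0 | h0
    · refine Or.inr (mem_iUnion.mpr ⟨9, mem_segment_pt' _ _ _ (-(p 0))
        (by linarith) (by linarith) ?_ ?_⟩)
      · show p 0 = (1 - -(p 0)) * 0 + (-(p 0)) * (-1); ring
      · show p 1 = (1 - -(p 0)) * 0 + (-(p 0)) * 0; rw [hy]; ring
    rcases lt_trichotomy (p 0) 1 with h1 | h1 | h1
    · refine Or.inl (mem_interior_of_open (isOpen_omouth 0)
        (omouth_sub (by norm_num) (by norm_num) tooth0_sub)
        ⟨by linarith, by linarith, by linarith, ?_, ?_⟩)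
      · rw [hy]; exact mul_pos hrt (by linarith)
      · rw [hy]; exact mul_pos hrt (by linarith)
    · refine Or.inr (mem_iUnion.mpr ⟨7, mem_segment_pt' _ _ _ 0 le_rfl zero_le_one ?_ ?_⟩)
      · show p 0 = (1 - 0) * 1 + 0 * (1/2); rw [h1]; ring
      · show p 1 = (1 - 0) * 0 + 0 * (rt3/2); rw [hy]; ring
    rcases lt_trichotomy (p 0) 2 with h2 | h2 | h2
    · refine Or.inl (mem_interior_of_open (isOpen_omouth 1)
        (omouth_sub (by norm_num) (by norm_num) tooth1_sub)
        ⟨by linarith, by linarith, by linarith, ?_, ?_⟩)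
      · rw [hy]; exact mul_pos hrt (by linarith)
      · rw [hy]; exact mul_pos hrt (by linarith)
    · refine Or.inr (mem_iUnion.mpr ⟨5, mem_segment_pt' _ _ _ 0 le_rfl zero_le_one ?_ ?_⟩)
      · show p 0 = (1 - 0) * 2 + 0 * (3/2); rw [h2]; ring
      · show p 1 = (1 - 0) * 0 + 0 * (rt3/2); rw [hy]; ring
    rcases lt_trichotomy (p 0) 3 with h3 | h3 | h3
    · refine Or.inl (mem_interior_of_open (isOpen_omouth 2)
        (omouth_sub (by norm_num) (by norm_num) tooth2_sub)
        ⟨by linarith, by linarith, by linarith, ?_, ?_⟩)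
      · rw [hy]; exact mul_pos hrt (by linarith)
      · rw [hy]; exact mul_pos hrt (by linarith)
    · refine Or.inr (mem_iUnion.mpr ⟨3, mem_segment_pt' _ _ _ 0 le_rfl zero_le_one ?_ ?_⟩)
      · show p 0 = (1 - 0) * 3 + 0 * (5/2); rw [h3]; ring
      · show p 1 = (1 - 0) * 0 + 0 * (rt3/2); rw [hy]; ring
    · refine Or.inr (mem_iUnion.mpr ⟨2, mem_segment_pt' _ _ _ (4 - p 0)
        (by linarith) (by linarith) ?_ ?_⟩)
      · show p 0 = (1 - (4 - p 0)) * 4 + (4 - p 0) * 3; ring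
      · show p 1 = (1 - (4 - p 0)) * 0 + (4 - p 0) * 0; rw [hy]; ring
  · -- above the mouths: p in some tooth
    have hp' : p ∈ tooth 0 ∨ p ∈ tooth 1 ∨ p ∈ tooth 2 := by
      rcases hp with h | h | h | h
      · exact absurd h.2.2.2 (not_le.mpr hy)
      · exact Or.inl h
      · exact Or.inr (Or.inl h)
      · exact Or.inr (Or.inr h)
    rcases hp' with ⟨_, h2, h3⟩ | ⟨_, h2, h3⟩ | ⟨_, h2, h3⟩
    · -- tooth 0
      rcases eq_or_lt_of_le h2 with heL | hL
      · -- left edge of tooth 0 : edge 8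
        have hub : p 0 ≤ 1/2 := by
          have := rt3_le (heL ▸ h3); linarith
        have hlb : 0 < p 0 := rt3_pos' (by rw [← sub_zero (p 0), ← heL]; exact hy)
        refine Or.inr (mem_iUnion.mpr ⟨8, mem_segment_pt' _ _ _ (1 - 2 * p 0)
          (by linarith) (by linarith) ?_ ?_⟩)
        · show p 0 = (1 - (1 - 2 * p 0)) * (1/2) + (1 - 2 * p 0) * 0; ring
        · show p 1 = (1 - (1 - 2 * p 0)) * (rt3/2) + (1 - 2 * p 0) * 0; rw [heL]; ring
      rcases eq_or_lt_of_le h3 with heR | hR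
      · -- right edge of tooth 0 : edge 7
        have hub : 1/2 ≤ p 0 := by
          have := rt3_le (le_of_lt (heR ▸ hL)); linarith
        have hlb : p 0 < 1 := by
          have := rt3_pos' (heR ▸ hy); linarith
        refine Or.inr (mem_iUnion.mpr ⟨7, mem_segment_pt' _ _ _ (2 - 2 * p 0)
          (by linarith) (by linarith) ?_ ?_⟩)
        · show p 0 = (1 - (2 - 2 * p 0)) * 1 + (2 - 2 * p 0) * (1/2); ring
        · show p 1 = (1 - (2 - 2 * p 0)) * 0 + (2 - 2 * p 0) * (rt3/2); rw [heR]; ring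
      · exact Or.inl (mem_interior_of_open (isOpen_otooth 0)
          (fun q hq => tooth0_sub (otooth_sub_tooth 0 hq)) ⟨hy, hL, hR⟩)
    · -- tooth 1
      rcases eq_or_lt_of_le h2 with heL | hL
      · have hub : p 0 ≤ 3/2 := by
          have := rt3_le (heL ▸ h3); linarith
        have hlb : 1 < p 0 := by
          have := rt3_pos' (heL ▸ hy); linarith
        refine Or.inr (mem_iUnion.mpr ⟨6, mem_segment_pt' _ _ _ (3 - 2 * p 0)
          (by linarith) (by linarith) ?_ ?_⟩)
        · show p 0 = (1 - (3 - 2 * p 0)) * (3/2) + (3 - 2 * p 0) * 1; ring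
        · show p 1 = (1 - (3 - 2 * p 0)) * (rt3/2) + (3 - 2 * p 0) * 0; rw [heL]; ring
      rcases eq_or_lt_of_le h3 with heR | hR
      · have hub : 3/2 ≤ p 0 := by
          have := rt3_le (le_of_lt (heR ▸ hL)); linarith
        have hlb : p 0 < 2 := by
          have := rt3_pos' (heR ▸ hy); linarith
        refine Or.inr (mem_iUnion.mpr ⟨5, mem_segment_pt' _ _ _ (4 - 2 * p 0)
          (by linarith) (by linarith) ?_ ?_⟩)
        · show p 0 = (1 - (4 - 2 * p 0)) * 2 + (4 - 2 * p 0) * (3/2); ring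
        · show p 1 = (1 - (4 - 2 * p 0)) * 0 + (4 - 2 * p 0) * (rt3/2); rw [heR]; ring
      · exact Or.inl (mem_interior_of_open (isOpen_otooth 1)
          (fun q hq => tooth1_sub (otooth_sub_tooth 1 hq)) ⟨hy, hL, hR⟩)
    · -- tooth 2
      rcases eq_or_lt_of_le h2 with heL | hL
      · have hub : p 0 ≤ 5/2 := by
          have := rt3_le (heL ▸ h3); linarith
        have hlb : 2 < p 0 := by
          have := rt3_pos' (heL ▸ hy); linarith
        refine Or.inr (mem_iUnion.mpr ⟨4, mem_segment_pt' _ _ _ (5 - 2 * p 0)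
          (by linarith) (by linarith) ?_ ?_⟩)
        · show p 0 = (1 - (5 - 2 * p 0)) * (5/2) + (5 - 2 * p 0) * 2; ring
        · show p 1 = (1 - (5 - 2 * p 0)) * (rt3/2) + (5 - 2 * p 0) * 0; rw [heL]; ring
      rcases eq_or_lt_of_le h3 with heR | hR
      · have hub : 5/2 ≤ p 0 := by
          have := rt3_le (le_of_lt (heR ▸ hL)); linarith
        have hlb : p 0 < 3 := by
          have := rt3_pos' (heR ▸ hy); linarith
        refine Or.inr (mem_iUnion.mpr ⟨3, mem_segment_pt' _ _ _ (6 - 2 * p 0)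
          (by linarith) (by linarith) ?_ ?_⟩)
        · show p 0 = (1 - (6 - 2 * p 0)) * 3 + (6 - 2 * p 0) * (5/2); ring
        · show p 1 = (1 - (6 - 2 * p 0)) * 0 + (6 - 2 * p 0) * (rt3/2); rw [heR]; ring
      · exact Or.inl (mem_interior_of_open (isOpen_otooth 2)
          (fun q hq => tooth2_sub (otooth_sub_tooth 2 hq)) ⟨hy, hL, hR⟩)


lemma E_not_int : ∀ p ∈ E, p ∉ interior poly := by
  intro p hp
  rw [E, mem_iUnion] at hp
  obtain ⟨i, hi⟩ := hp
  have hrt := rt3_pos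
  rcases zmod11_cases i with rfl|rfl|rfl|rfl|rfl|rfl|rfl|rfl|rfl|rfl|rfl <;>
    obtain ⟨t', ht0, ht1, hx, hy⟩ := seg_coord hi
  · -- edge 0, bottom, direction down
    have hy' : p 1 = (1 - t') * (-1) + t' * (-1) := hy
    refine not_mem_interior (pt 0 (-1)) (fun t ht => not_in_poly_down ?_ ht)
    show p 1 + t * (-1) = -1 - t
    rw [hy']; ring
  · -- edge 1, right side, direction right
    have hx' : p 0 = (1 - t') * 4 + t' * 4 := hx
    refine not_mem_interior (pt 1 0) (fun t ht => not_in_poly_right ?_ ht)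
    show p 0 + t * 1 = 4 + t
    rw [hx']; ring
  · -- edge 2, top shelf right
    have hx' : p 0 = (1 - t') * 4 + t' * 3 := hx
    have hy' : p 1 = (1 - t') * 0 + t' * 0 := hy
    refine not_mem_interior (pt 0 1) (fun t ht => not_in_poly_up (x := p 0) (y := p 1) ?_ ?_ ?_ ht ?_ ?_ ?_)
    · show p 0 + t * 0 = p 0; ring
    · show p 1 + t * 1 = p 1 + t; ring
    · rw [hy']; linarith
    · refine Or.inr ?_
      rw [hx', hy']
      nlinarith [mul_nonneg rt3_pos.le ht0, mul_nonneg rt3_pos.le (show (0:ℝ) ≤ 1 - t' by linarith)]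
    · refine Or.inr ?_
      rw [hx', hy']
      nlinarith [mul_nonneg rt3_pos.le ht0, mul_nonneg rt3_pos.le (show (0:ℝ) ≤ 1 - t' by linarith)]
    · refine Or.inr ?_
      rw [hx', hy']
      nlinarith [mul_nonneg rt3_pos.le ht0, mul_nonneg rt3_pos.le (show (0:ℝ) ≤ 1 - t' by linarith)]
  · -- edge 3, right edge of tooth 2
    have hx' : p 0 = (1 - t') * 3 + t' * (5/2) := hx
    have hy' : p 1 = (1 - t') * 0 + t' * (rt3/2) := hy
    refine not_mem_interior (pt 0 1) (fun t ht => not_in_poly_up (x := p 0) (y := p 1) ?_ ?_ ?_ ht ?_ ?_ ?_)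
    · show p 0 + t * 0 = p 0; ring
    · show p 1 + t * 1 = p 1 + t; ring
    · rw [hy']; nlinarith [mul_nonneg rt3_pos.le ht0]
    · refine Or.inr ?_
      rw [hx', hy']
      nlinarith [mul_nonneg rt3_pos.le ht0, mul_nonneg rt3_pos.le (show (0:ℝ) ≤ 1 - t' by linarith)]
    · refine Or.inr ?_
      rw [hx', hy']
      nlinarith [mul_nonneg rt3_pos.le ht0, mul_nonneg rt3_pos.le (show (0:ℝ) ≤ 1 - t' by linarith)]
    · exact Or.inr (le_of_eq (by rw [hx', hy']; ring))
  · -- edge 4, left edge of tooth 2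
    have hx' : p 0 = (1 - t') * (5/2) + t' * 2 := hx
    have hy' : p 1 = (1 - t') * (rt3/2) + t' * 0 := hy
    refine not_mem_interior (pt 0 1) (fun t ht => not_in_poly_up (x := p 0) (y := p 1) ?_ ?_ ?_ ht ?_ ?_ ?_)
    · show p 0 + t * 0 = p 0; ring
    · show p 1 + t * 1 = p 1 + t; ring
    · rw [hy']; nlinarith [mul_nonneg rt3_pos.le (show (0:ℝ) ≤ 1 - t' by linarith)]
    · refine Or.inr ?_
      rw [hx', hy']
      nlinarith [mul_nonneg rt3_pos.le ht0, mul_nonneg rt3_pos.le (show (0:ℝ) ≤ 1 - t' by linarith)]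
    · refine Or.inr ?_
      rw [hx', hy']
      nlinarith [mul_nonneg rt3_pos.le ht0, mul_nonneg rt3_pos.le (show (0:ℝ) ≤ 1 - t' by linarith)]
    · exact Or.inl (le_of_eq (by rw [hx', hy']; ring))
  · -- edge 5, right edge of tooth 1
    have hx' : p 0 = (1 - t') * 2 + t' * (3/2) := hx
    have hy' : p 1 = (1 - t') * 0 + t' * (rt3/2) := hy
    refine not_mem_interior (pt 0 1) (fun t ht => not_in_poly_up (x := p 0) (y := p 1) ?_ ?_ ?_ ht ?_ ?_ ?_)
    · show p 0 + t * 0 = p 0; ring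
    · show p 1 + t * 1 = p 1 + t; ring
    · rw [hy']; nlinarith [mul_nonneg rt3_pos.le ht0]
    · refine Or.inr ?_
      rw [hx', hy']
      nlinarith [mul_nonneg rt3_pos.le ht0, mul_nonneg rt3_pos.le (show (0:ℝ) ≤ 1 - t' by linarith)]
    · exact Or.inr (le_of_eq (by rw [hx', hy']; ring))
    · refine Or.inl ?_
      rw [hx', hy']
      nlinarith [mul_nonneg rt3_pos.le ht0, mul_nonneg rt3_pos.le (show (0:ℝ) ≤ 1 - t' by linarith)]
  · -- edge 6, left edge of tooth 1
    have hx' : p 0 = (1 - t') * (3/2) + t' * 1 := hx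
    have hy' : p 1 = (1 - t') * (rt3/2) + t' * 0 := hy
    refine not_mem_interior (pt 0 1) (fun t ht => not_in_poly_up (x := p 0) (y := p 1) ?_ ?_ ?_ ht ?_ ?_ ?_)
    · show p 0 + t * 0 = p 0; ring
    · show p 1 + t * 1 = p 1 + t; ring
    · rw [hy']; nlinarith [mul_nonneg rt3_pos.le (show (0:ℝ) ≤ 1 - t' by linarith)]
    · refine Or.inr ?_
      rw [hx', hy']
      nlinarith [mul_nonneg rt3_pos.le ht0, mul_nonneg rt3_pos.le (show (0:ℝ) ≤ 1 - t' by linarith)]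
    · exact Or.inl (le_of_eq (by rw [hx', hy']; ring))
    · refine Or.inl ?_
      rw [hx', hy']
      nlinarith [mul_nonneg rt3_pos.le ht0, mul_nonneg rt3_pos.le (show (0:ℝ) ≤ 1 - t' by linarith)]
  · -- edge 7, right edge of tooth 0
    have hx' : p 0 = (1 - t') * 1 + t' * (1/2) := hx
    have hy' : p 1 = (1 - t') * 0 + t' * (rt3/2) := hy
    refine not_mem_interior (pt 0 1) (fun t ht => not_in_poly_up (x := p 0) (y := p 1) ?_ ?_ ?_ ht ?_ ?_ ?_)
    · show p 0 + t * 0 = p 0; ring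
    · show p 1 + t * 1 = p 1 + t; ring
    · rw [hy']; nlinarith [mul_nonneg rt3_pos.le ht0]
    · exact Or.inr (le_of_eq (by rw [hx', hy']; ring))
    · refine Or.inl ?_
      rw [hx', hy']
      nlinarith [mul_nonneg rt3_pos.le ht0, mul_nonneg rt3_pos.le (show (0:ℝ) ≤ 1 - t' by linarith)]
    · refine Or.inl ?_
      rw [hx', hy']
      nlinarith [mul_nonneg rt3_pos.le ht0, mul_nonneg rt3_pos.le (show (0:ℝ) ≤ 1 - t' by linarith)]
  · -- edge 8, left edge of tooth 0
    have hx' : p 0 = (1 - t') * (1/2) + t' * 0 := hx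
    have hy' : p 1 = (1 - t') * (rt3/2) + t' * 0 := hy
    refine not_mem_interior (pt 0 1) (fun t ht => not_in_poly_up (x := p 0) (y := p 1) ?_ ?_ ?_ ht ?_ ?_ ?_)
    · show p 0 + t * 0 = p 0; ring
    · show p 1 + t * 1 = p 1 + t; ring
    · rw [hy']; nlinarith [mul_nonneg rt3_pos.le (show (0:ℝ) ≤ 1 - t' by linarith)]
    · exact Or.inl (le_of_eq (by rw [hx', hy']; ring))
    · refine Or.inl ?_
      rw [hx', hy']
      nlinarith [mul_nonneg rt3_pos.le ht0, mul_nonneg rt3_pos.le (show (0:ℝ) ≤ 1 - t' by linarith)]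
    · refine Or.inl ?_
      rw [hx', hy']
      nlinarith [mul_nonneg rt3_pos.le ht0, mul_nonneg rt3_pos.le (show (0:ℝ) ≤ 1 - t' by linarith)]
  · -- edge 9, top shelf left
    have hx' : p 0 = (1 - t') * 0 + t' * (-1) := hx
    have hy' : p 1 = (1 - t') * 0 + t' * 0 := hy
    refine not_mem_interior (pt 0 1) (fun t ht => not_in_poly_up (x := p 0) (y := p 1) ?_ ?_ ?_ ht ?_ ?_ ?_)
    · show p 0 + t * 0 = p 0; ring
    · show p 1 + t * 1 = p 1 + t; ring
    · rw [hy']; linarith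
    · refine Or.inl ?_
      rw [hx', hy']
      nlinarith [mul_nonneg rt3_pos.le ht0, mul_nonneg rt3_pos.le (show (0:ℝ) ≤ 1 - t' by linarith)]
    · refine Or.inl ?_
      rw [hx', hy']
      nlinarith [mul_nonneg rt3_pos.le ht0, mul_nonneg rt3_pos.le (show (0:ℝ) ≤ 1 - t' by linarith)]
    · refine Or.inl ?_
      rw [hx', hy']
      nlinarith [mul_nonneg rt3_pos.le ht0, mul_nonneg rt3_pos.le (show (0:ℝ) ≤ 1 - t' by linarith)]
  · -- edge 10, left side, direction left
    have hx' : p 0 = (1 - t') * (-1) + t' * (-1) := hx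
    refine not_mem_interior (pt (-1) 0) (fun t ht => not_in_poly_left ?_ ht)
    show p 0 + t * (-1) = -1 - t
    rw [hx']; ring

lemma frontier_poly : frontier poly = E := by
  rw [isClosed_poly.frontier_eq]
  apply Subset.antisymm
  · rintro p ⟨hp, hnotint⟩
    rcases poly_sub_int_E hp with h | h
    · exact absurd h hnotint
    · exact h
  · intro p hp
    exact ⟨E_subset_poly hp, E_not_int p hp⟩


/-! ### distances and injectivity -/

lemma dist_pt (a b c d : ℝ) : dist (pt a b) (pt c d) = Real.sqrt ((a-c)^2 + (b-d)^2) := by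
  rw [EuclideanSpace.dist_eq]
  congr 1
  rw [Fin.sum_univ_two]
  simp [pt, Real.dist_eq, sq_abs]

lemma one_le_dist_of_sq {a b c d : ℝ} (h : 1 ≤ (a-c)^2 + (b-d)^2) :
    1 ≤ dist (pt a b) (pt c d) := by
  rw [dist_pt, show (1:ℝ) = Real.sqrt 1 by rw [Real.sqrt_one]]
  exact Real.sqrt_le_sqrt h

lemma one_of_sq {a b c d : ℝ} (h : (a-c)^2 + (b-d)^2 = 1) :
    dist (pt a b) (pt c d) ≤ 1 := by
  rw [dist_pt, h, Real.sqrt_one]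

lemma vert_dist : ∀ i j : ZMod 11, i ≠ j → 1 ≤ dist (vert i) (vert j) := by
  intro i j hij
  rcases zmod11_cases i with rfl|rfl|rfl|rfl|rfl|rfl|rfl|rfl|rfl|rfl|rfl <;>
    rcases zmod11_cases j with rfl|rfl|rfl|rfl|rfl|rfl|rfl|rfl|rfl|rfl|rfl
  · exact absurd rfl hij
  · exact one_le_dist_of_sq (show (1:ℝ) ≤ ((-1) - (4))^2 + ((-1) - (-1))^2 by norm_num)
  · exact one_le_dist_of_sq (show (1:ℝ) ≤ ((-1) - (4))^2 + ((-1) - (0))^2 by norm_num)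
  · exact one_le_dist_of_sq (show (1:ℝ) ≤ ((-1) - (3))^2 + ((-1) - (0))^2 by norm_num)
  · exact one_le_dist_of_sq (show (1:ℝ) ≤ ((-1) - (5/2))^2 + ((-1) - (rt3/2))^2 by nlinarith [rt3_sq, rt3_pos])
  · exact one_le_dist_of_sq (show (1:ℝ) ≤ ((-1) - (2))^2 + ((-1) - (0))^2 by norm_num)
  · exact one_le_dist_of_sq (show (1:ℝ) ≤ ((-1) - (3/2))^2 + ((-1) - (rt3/2))^2 by nlinarith [rt3_sq, rt3_pos])
  · exact one_le_dist_of_sq (show (1:ℝ) ≤ ((-1) - (1))^2 + ((-1) - (0))^2 by norm_num)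
  · exact one_le_dist_of_sq (show (1:ℝ) ≤ ((-1) - (1/2))^2 + ((-1) - (rt3/2))^2 by nlinarith [rt3_sq, rt3_pos])
  · exact one_le_dist_of_sq (show (1:ℝ) ≤ ((-1) - (0))^2 + ((-1) - (0))^2 by norm_num)
  · exact one_le_dist_of_sq (show (1:ℝ) ≤ ((-1) - (-1))^2 + ((-1) - (0))^2 by norm_num)
  · exact one_le_dist_of_sq (show (1:ℝ) ≤ ((4) - (-1))^2 + ((-1) - (-1))^2 by norm_num)
  · exact absurd rfl hij
  · exact one_le_dist_of_sq (show (1:ℝ) ≤ ((4) - (4))^2 + ((-1) - (0))^2 by norm_num)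
  · exact one_le_dist_of_sq (show (1:ℝ) ≤ ((4) - (3))^2 + ((-1) - (0))^2 by norm_num)
  · exact one_le_dist_of_sq (show (1:ℝ) ≤ ((4) - (5/2))^2 + ((-1) - (rt3/2))^2 by nlinarith [rt3_sq, rt3_pos])
  · exact one_le_dist_of_sq (show (1:ℝ) ≤ ((4) - (2))^2 + ((-1) - (0))^2 by norm_num)
  · exact one_le_dist_of_sq (show (1:ℝ) ≤ ((4) - (3/2))^2 + ((-1) - (rt3/2))^2 by nlinarith [rt3_sq, rt3_pos])
  · exact one_le_dist_of_sq (show (1:ℝ) ≤ ((4) - (1))^2 + ((-1) - (0))^2 by norm_num)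
  · exact one_le_dist_of_sq (show (1:ℝ) ≤ ((4) - (1/2))^2 + ((-1) - (rt3/2))^2 by nlinarith [rt3_sq, rt3_pos])
  · exact one_le_dist_of_sq (show (1:ℝ) ≤ ((4) - (0))^2 + ((-1) - (0))^2 by norm_num)
  · exact one_le_dist_of_sq (show (1:ℝ) ≤ ((4) - (-1))^2 + ((-1) - (0))^2 by norm_num)
  · exact one_le_dist_of_sq (show (1:ℝ) ≤ ((4) - (-1))^2 + ((0) - (-1))^2 by norm_num)
  · exact one_le_dist_of_sq (show (1:ℝ) ≤ ((4) - (4))^2 + ((0) - (-1))^2 by norm_num)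
  · exact absurd rfl hij
  · exact one_le_dist_of_sq (show (1:ℝ) ≤ ((4) - (3))^2 + ((0) - (0))^2 by norm_num)
  · exact one_le_dist_of_sq (show (1:ℝ) ≤ ((4) - (5/2))^2 + ((0) - (rt3/2))^2 by nlinarith [rt3_sq, rt3_pos])
  · exact one_le_dist_of_sq (show (1:ℝ) ≤ ((4) - (2))^2 + ((0) - (0))^2 by norm_num)
  · exact one_le_dist_of_sq (show (1:ℝ) ≤ ((4) - (3/2))^2 + ((0) - (rt3/2))^2 by nlinarith [rt3_sq, rt3_pos])
  · exact one_le_dist_of_sq (show (1:ℝ) ≤ ((4) - (1))^2 + ((0) - (0))^2 by norm_num)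
  · exact one_le_dist_of_sq (show (1:ℝ) ≤ ((4) - (1/2))^2 + ((0) - (rt3/2))^2 by nlinarith [rt3_sq, rt3_pos])
  · exact one_le_dist_of_sq (show (1:ℝ) ≤ ((4) - (0))^2 + ((0) - (0))^2 by norm_num)
  · exact one_le_dist_of_sq (show (1:ℝ) ≤ ((4) - (-1))^2 + ((0) - (0))^2 by norm_num)
  · exact one_le_dist_of_sq (show (1:ℝ) ≤ ((3) - (-1))^2 + ((0) - (-1))^2 by norm_num)
  · exact one_le_dist_of_sq (show (1:ℝ) ≤ ((3) - (4))^2 + ((0) - (-1))^2 by norm_num)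
  · exact one_le_dist_of_sq (show (1:ℝ) ≤ ((3) - (4))^2 + ((0) - (0))^2 by norm_num)
  · exact absurd rfl hij
  · exact one_le_dist_of_sq (show (1:ℝ) ≤ ((3) - (5/2))^2 + ((0) - (rt3/2))^2 by nlinarith [rt3_sq, rt3_pos])
  · exact one_le_dist_of_sq (show (1:ℝ) ≤ ((3) - (2))^2 + ((0) - (0))^2 by norm_num)
  · exact one_le_dist_of_sq (show (1:ℝ) ≤ ((3) - (3/2))^2 + ((0) - (rt3/2))^2 by nlinarith [rt3_sq, rt3_pos])
  · exact one_le_dist_of_sq (show (1:ℝ) ≤ ((3) - (1))^2 + ((0) - (0))^2 by norm_num)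
  · exact one_le_dist_of_sq (show (1:ℝ) ≤ ((3) - (1/2))^2 + ((0) - (rt3/2))^2 by nlinarith [rt3_sq, rt3_pos])
  · exact one_le_dist_of_sq (show (1:ℝ) ≤ ((3) - (0))^2 + ((0) - (0))^2 by norm_num)
  · exact one_le_dist_of_sq (show (1:ℝ) ≤ ((3) - (-1))^2 + ((0) - (0))^2 by norm_num)
  · exact one_le_dist_of_sq (show (1:ℝ) ≤ ((5/2) - (-1))^2 + ((rt3/2) - (-1))^2 by nlinarith [rt3_sq, rt3_pos])
  · exact one_le_dist_of_sq (show (1:ℝ) ≤ ((5/2) - (4))^2 + ((rt3/2) - (-1))^2 by nlinarith [rt3_sq, rt3_pos])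
  · exact one_le_dist_of_sq (show (1:ℝ) ≤ ((5/2) - (4))^2 + ((rt3/2) - (0))^2 by nlinarith [rt3_sq, rt3_pos])
  · exact one_le_dist_of_sq (show (1:ℝ) ≤ ((5/2) - (3))^2 + ((rt3/2) - (0))^2 by nlinarith [rt3_sq, rt3_pos])
  · exact absurd rfl hij
  · exact one_le_dist_of_sq (show (1:ℝ) ≤ ((5/2) - (2))^2 + ((rt3/2) - (0))^2 by nlinarith [rt3_sq, rt3_pos])
  · exact one_le_dist_of_sq (show (1:ℝ) ≤ ((5/2) - (3/2))^2 + ((rt3/2) - (rt3/2))^2 by nlinarith [rt3_sq, rt3_pos])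
  · exact one_le_dist_of_sq (show (1:ℝ) ≤ ((5/2) - (1))^2 + ((rt3/2) - (0))^2 by nlinarith [rt3_sq, rt3_pos])
  · exact one_le_dist_of_sq (show (1:ℝ) ≤ ((5/2) - (1/2))^2 + ((rt3/2) - (rt3/2))^2 by nlinarith [rt3_sq, rt3_pos])
  · exact one_le_dist_of_sq (show (1:ℝ) ≤ ((5/2) - (0))^2 + ((rt3/2) - (0))^2 by nlinarith [rt3_sq, rt3_pos])
  · exact one_le_dist_of_sq (show (1:ℝ) ≤ ((5/2) - (-1))^2 + ((rt3/2) - (0))^2 by nlinarith [rt3_sq, rt3_pos])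
  · exact one_le_dist_of_sq (show (1:ℝ) ≤ ((2) - (-1))^2 + ((0) - (-1))^2 by norm_num)
  · exact one_le_dist_of_sq (show (1:ℝ) ≤ ((2) - (4))^2 + ((0) - (-1))^2 by norm_num)
  · exact one_le_dist_of_sq (show (1:ℝ) ≤ ((2) - (4))^2 + ((0) - (0))^2 by norm_num)
  · exact one_le_dist_of_sq (show (1:ℝ) ≤ ((2) - (3))^2 + ((0) - (0))^2 by norm_num)
  · exact one_le_dist_of_sq (show (1:ℝ) ≤ ((2) - (5/2))^2 + ((0) - (rt3/2))^2 by nlinarith [rt3_sq, rt3_pos])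
  · exact absurd rfl hij
  · exact one_le_dist_of_sq (show (1:ℝ) ≤ ((2) - (3/2))^2 + ((0) - (rt3/2))^2 by nlinarith [rt3_sq, rt3_pos])
  · exact one_le_dist_of_sq (show (1:ℝ) ≤ ((2) - (1))^2 + ((0) - (0))^2 by norm_num)
  · exact one_le_dist_of_sq (show (1:ℝ) ≤ ((2) - (1/2))^2 + ((0) - (rt3/2))^2 by nlinarith [rt3_sq, rt3_pos])
  · exact one_le_dist_of_sq (show (1:ℝ) ≤ ((2) - (0))^2 + ((0) - (0))^2 by norm_num)
  · exact one_le_dist_of_sq (show (1:ℝ) ≤ ((2) - (-1))^2 + ((0) - (0))^2 by norm_num)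
  · exact one_le_dist_of_sq (show (1:ℝ) ≤ ((3/2) - (-1))^2 + ((rt3/2) - (-1))^2 by nlinarith [rt3_sq, rt3_pos])
  · exact one_le_dist_of_sq (show (1:ℝ) ≤ ((3/2) - (4))^2 + ((rt3/2) - (-1))^2 by nlinarith [rt3_sq, rt3_pos])
  · exact one_le_dist_of_sq (show (1:ℝ) ≤ ((3/2) - (4))^2 + ((rt3/2) - (0))^2 by nlinarith [rt3_sq, rt3_pos])
  · exact one_le_dist_of_sq (show (1:ℝ) ≤ ((3/2) - (3))^2 + ((rt3/2) - (0))^2 by nlinarith [rt3_sq, rt3_pos])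
  · exact one_le_dist_of_sq (show (1:ℝ) ≤ ((3/2) - (5/2))^2 + ((rt3/2) - (rt3/2))^2 by nlinarith [rt3_sq, rt3_pos])
  · exact one_le_dist_of_sq (show (1:ℝ) ≤ ((3/2) - (2))^2 + ((rt3/2) - (0))^2 by nlinarith [rt3_sq, rt3_pos])
  · exact absurd rfl hij
  · exact one_le_dist_of_sq (show (1:ℝ) ≤ ((3/2) - (1))^2 + ((rt3/2) - (0))^2 by nlinarith [rt3_sq, rt3_pos])
  · exact one_le_dist_of_sq (show (1:ℝ) ≤ ((3/2) - (1/2))^2 + ((rt3/2) - (rt3/2))^2 by nlinarith [rt3_sq, rt3_pos])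
  · exact one_le_dist_of_sq (show (1:ℝ) ≤ ((3/2) - (0))^2 + ((rt3/2) - (0))^2 by nlinarith [rt3_sq, rt3_pos])
  · exact one_le_dist_of_sq (show (1:ℝ) ≤ ((3/2) - (-1))^2 + ((rt3/2) - (0))^2 by nlinarith [rt3_sq, rt3_pos])
  · exact one_le_dist_of_sq (show (1:ℝ) ≤ ((1) - (-1))^2 + ((0) - (-1))^2 by norm_num)
  · exact one_le_dist_of_sq (show (1:ℝ) ≤ ((1) - (4))^2 + ((0) - (-1))^2 by norm_num)
  · exact one_le_dist_of_sq (show (1:ℝ) ≤ ((1) - (4))^2 + ((0) - (0))^2 by norm_num)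
  · exact one_le_dist_of_sq (show (1:ℝ) ≤ ((1) - (3))^2 + ((0) - (0))^2 by norm_num)
  · exact one_le_dist_of_sq (show (1:ℝ) ≤ ((1) - (5/2))^2 + ((0) - (rt3/2))^2 by nlinarith [rt3_sq, rt3_pos])
  · exact one_le_dist_of_sq (show (1:ℝ) ≤ ((1) - (2))^2 + ((0) - (0))^2 by norm_num)
  · exact one_le_dist_of_sq (show (1:ℝ) ≤ ((1) - (3/2))^2 + ((0) - (rt3/2))^2 by nlinarith [rt3_sq, rt3_pos])
  · exact absurd rfl hij
  · exact one_le_dist_of_sq (show (1:ℝ) ≤ ((1) - (1/2))^2 + ((0) - (rt3/2))^2 by nlinarith [rt3_sq, rt3_pos])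
  · exact one_le_dist_of_sq (show (1:ℝ) ≤ ((1) - (0))^2 + ((0) - (0))^2 by norm_num)
  · exact one_le_dist_of_sq (show (1:ℝ) ≤ ((1) - (-1))^2 + ((0) - (0))^2 by norm_num)
  · exact one_le_dist_of_sq (show (1:ℝ) ≤ ((1/2) - (-1))^2 + ((rt3/2) - (-1))^2 by nlinarith [rt3_sq, rt3_pos])
  · exact one_le_dist_of_sq (show (1:ℝ) ≤ ((1/2) - (4))^2 + ((rt3/2) - (-1))^2 by nlinarith [rt3_sq, rt3_pos])
  · exact one_le_dist_of_sq (show (1:ℝ) ≤ ((1/2) - (4))^2 + ((rt3/2) - (0))^2 by nlinarith [rt3_sq, rt3_pos])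
  · exact one_le_dist_of_sq (show (1:ℝ) ≤ ((1/2) - (3))^2 + ((rt3/2) - (0))^2 by nlinarith [rt3_sq, rt3_pos])
  · exact one_le_dist_of_sq (show (1:ℝ) ≤ ((1/2) - (5/2))^2 + ((rt3/2) - (rt3/2))^2 by nlinarith [rt3_sq, rt3_pos])
  · exact one_le_dist_of_sq (show (1:ℝ) ≤ ((1/2) - (2))^2 + ((rt3/2) - (0))^2 by nlinarith [rt3_sq, rt3_pos])
  · exact one_le_dist_of_sq (show (1:ℝ) ≤ ((1/2) - (3/2))^2 + ((rt3/2) - (rt3/2))^2 by nlinarith [rt3_sq, rt3_pos])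
  · exact one_le_dist_of_sq (show (1:ℝ) ≤ ((1/2) - (1))^2 + ((rt3/2) - (0))^2 by nlinarith [rt3_sq, rt3_pos])
  · exact absurd rfl hij
  · exact one_le_dist_of_sq (show (1:ℝ) ≤ ((1/2) - (0))^2 + ((rt3/2) - (0))^2 by nlinarith [rt3_sq, rt3_pos])
  · exact one_le_dist_of_sq (show (1:ℝ) ≤ ((1/2) - (-1))^2 + ((rt3/2) - (0))^2 by nlinarith [rt3_sq, rt3_pos])
  · exact one_le_dist_of_sq (show (1:ℝ) ≤ ((0) - (-1))^2 + ((0) - (-1))^2 by norm_num)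
  · exact one_le_dist_of_sq (show (1:ℝ) ≤ ((0) - (4))^2 + ((0) - (-1))^2 by norm_num)
  · exact one_le_dist_of_sq (show (1:ℝ) ≤ ((0) - (4))^2 + ((0) - (0))^2 by norm_num)
  · exact one_le_dist_of_sq (show (1:ℝ) ≤ ((0) - (3))^2 + ((0) - (0))^2 by norm_num)
  · exact one_le_dist_of_sq (show (1:ℝ) ≤ ((0) - (5/2))^2 + ((0) - (rt3/2))^2 by nlinarith [rt3_sq, rt3_pos])
  · exact one_le_dist_of_sq (show (1:ℝ) ≤ ((0) - (2))^2 + ((0) - (0))^2 by norm_num)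
  · exact one_le_dist_of_sq (show (1:ℝ) ≤ ((0) - (3/2))^2 + ((0) - (rt3/2))^2 by nlinarith [rt3_sq, rt3_pos])
  · exact one_le_dist_of_sq (show (1:ℝ) ≤ ((0) - (1))^2 + ((0) - (0))^2 by norm_num)
  · exact one_le_dist_of_sq (show (1:ℝ) ≤ ((0) - (1/2))^2 + ((0) - (rt3/2))^2 by nlinarith [rt3_sq, rt3_pos])
  · exact absurd rfl hij
  · exact one_le_dist_of_sq (show (1:ℝ) ≤ ((0) - (-1))^2 + ((0) - (0))^2 by norm_num)
  · exact one_le_dist_of_sq (show (1:ℝ) ≤ ((-1) - (-1))^2 + ((0) - (-1))^2 by norm_num)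
  · exact one_le_dist_of_sq (show (1:ℝ) ≤ ((-1) - (4))^2 + ((0) - (-1))^2 by norm_num)
  · exact one_le_dist_of_sq (show (1:ℝ) ≤ ((-1) - (4))^2 + ((0) - (0))^2 by norm_num)
  · exact one_le_dist_of_sq (show (1:ℝ) ≤ ((-1) - (3))^2 + ((0) - (0))^2 by norm_num)
  · exact one_le_dist_of_sq (show (1:ℝ) ≤ ((-1) - (5/2))^2 + ((0) - (rt3/2))^2 by nlinarith [rt3_sq, rt3_pos])
  · exact one_le_dist_of_sq (show (1:ℝ) ≤ ((-1) - (2))^2 + ((0) - (0))^2 by norm_num)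
  · exact one_le_dist_of_sq (show (1:ℝ) ≤ ((-1) - (3/2))^2 + ((0) - (rt3/2))^2 by nlinarith [rt3_sq, rt3_pos])
  · exact one_le_dist_of_sq (show (1:ℝ) ≤ ((-1) - (1))^2 + ((0) - (0))^2 by norm_num)
  · exact one_le_dist_of_sq (show (1:ℝ) ≤ ((-1) - (1/2))^2 + ((0) - (rt3/2))^2 by nlinarith [rt3_sq, rt3_pos])
  · exact one_le_dist_of_sq (show (1:ℝ) ≤ ((-1) - (0))^2 + ((0) - (0))^2 by norm_num)
  · exact absurd rfl hij

lemma vert_inj : Function.Injective vert := by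
  intro i j h
  rcases zmod11_cases i with rfl|rfl|rfl|rfl|rfl|rfl|rfl|rfl|rfl|rfl|rfl <;>
    rcases zmod11_cases j with rfl|rfl|rfl|rfl|rfl|rfl|rfl|rfl|rfl|rfl|rfl
  · rfl
  · exact absurd (congrArg (fun w : Plane => w 0) h) (show ¬((-1:ℝ) = (4)) by norm_num)
  · exact absurd (congrArg (fun w : Plane => w 0) h) (show ¬((-1:ℝ) = (4)) by norm_num)
  · exact absurd (congrArg (fun w : Plane => w 0) h) (show ¬((-1:ℝ) = (3)) by norm_num)
  · exact absurd (congrArg (fun w : Plane => w 0) h) (show ¬((-1:ℝ) = (5/2)) by norm_num)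
  · exact absurd (congrArg (fun w : Plane => w 0) h) (show ¬((-1:ℝ) = (2)) by norm_num)
  · exact absurd (congrArg (fun w : Plane => w 0) h) (show ¬((-1:ℝ) = (3/2)) by norm_num)
  · exact absurd (congrArg (fun w : Plane => w 0) h) (show ¬((-1:ℝ) = (1)) by norm_num)
  · exact absurd (congrArg (fun w : Plane => w 0) h) (show ¬((-1:ℝ) = (1/2)) by norm_num)
  · exact absurd (congrArg (fun w : Plane => w 0) h) (show ¬((-1:ℝ) = (0)) by norm_num)
  · exact absurd (congrArg (fun w : Plane => w 1) h) (show ¬((-1:ℝ) = (0)) by norm_num)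
  · exact absurd (congrArg (fun w : Plane => w 0) h) (show ¬((4:ℝ) = (-1)) by norm_num)
  · rfl
  · exact absurd (congrArg (fun w : Plane => w 1) h) (show ¬((-1:ℝ) = (0)) by norm_num)
  · exact absurd (congrArg (fun w : Plane => w 0) h) (show ¬((4:ℝ) = (3)) by norm_num)
  · exact absurd (congrArg (fun w : Plane => w 0) h) (show ¬((4:ℝ) = (5/2)) by norm_num)
  · exact absurd (congrArg (fun w : Plane => w 0) h) (show ¬((4:ℝ) = (2)) by norm_num)
  · exact absurd (congrArg (fun w : Plane => w 0) h) (show ¬((4:ℝ) = (3/2)) by norm_num)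
  · exact absurd (congrArg (fun w : Plane => w 0) h) (show ¬((4:ℝ) = (1)) by norm_num)
  · exact absurd (congrArg (fun w : Plane => w 0) h) (show ¬((4:ℝ) = (1/2)) by norm_num)
  · exact absurd (congrArg (fun w : Plane => w 0) h) (show ¬((4:ℝ) = (0)) by norm_num)
  · exact absurd (congrArg (fun w : Plane => w 0) h) (show ¬((4:ℝ) = (-1)) by norm_num)
  · exact absurd (congrArg (fun w : Plane => w 0) h) (show ¬((4:ℝ) = (-1)) by norm_num)
  · exact absurd (congrArg (fun w : Plane => w 1) h) (show ¬((0:ℝ) = (-1)) by norm_num)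
  · rfl
  · exact absurd (congrArg (fun w : Plane => w 0) h) (show ¬((4:ℝ) = (3)) by norm_num)
  · exact absurd (congrArg (fun w : Plane => w 0) h) (show ¬((4:ℝ) = (5/2)) by norm_num)
  · exact absurd (congrArg (fun w : Plane => w 0) h) (show ¬((4:ℝ) = (2)) by norm_num)
  · exact absurd (congrArg (fun w : Plane => w 0) h) (show ¬((4:ℝ) = (3/2)) by norm_num)
  · exact absurd (congrArg (fun w : Plane => w 0) h) (show ¬((4:ℝ) = (1)) by norm_num)
  · exact absurd (congrArg (fun w : Plane => w 0) h) (show ¬((4:ℝ) = (1/2)) by norm_num)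
  · exact absurd (congrArg (fun w : Plane => w 0) h) (show ¬((4:ℝ) = (0)) by norm_num)
  · exact absurd (congrArg (fun w : Plane => w 0) h) (show ¬((4:ℝ) = (-1)) by norm_num)
  · exact absurd (congrArg (fun w : Plane => w 0) h) (show ¬((3:ℝ) = (-1)) by norm_num)
  · exact absurd (congrArg (fun w : Plane => w 0) h) (show ¬((3:ℝ) = (4)) by norm_num)
  · exact absurd (congrArg (fun w : Plane => w 0) h) (show ¬((3:ℝ) = (4)) by norm_num)
  · rfl
  · exact absurd (congrArg (fun w : Plane => w 0) h) (show ¬((3:ℝ) = (5/2)) by norm_num)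
  · exact absurd (congrArg (fun w : Plane => w 0) h) (show ¬((3:ℝ) = (2)) by norm_num)
  · exact absurd (congrArg (fun w : Plane => w 0) h) (show ¬((3:ℝ) = (3/2)) by norm_num)
  · exact absurd (congrArg (fun w : Plane => w 0) h) (show ¬((3:ℝ) = (1)) by norm_num)
  · exact absurd (congrArg (fun w : Plane => w 0) h) (show ¬((3:ℝ) = (1/2)) by norm_num)
  · exact absurd (congrArg (fun w : Plane => w 0) h) (show ¬((3:ℝ) = (0)) by norm_num)
  · exact absurd (congrArg (fun w : Plane => w 0) h) (show ¬((3:ℝ) = (-1)) by norm_num)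
  · exact absurd (congrArg (fun w : Plane => w 0) h) (show ¬((5/2:ℝ) = (-1)) by norm_num)
  · exact absurd (congrArg (fun w : Plane => w 0) h) (show ¬((5/2:ℝ) = (4)) by norm_num)
  · exact absurd (congrArg (fun w : Plane => w 0) h) (show ¬((5/2:ℝ) = (4)) by norm_num)
  · exact absurd (congrArg (fun w : Plane => w 0) h) (show ¬((5/2:ℝ) = (3)) by norm_num)
  · rfl
  · exact absurd (congrArg (fun w : Plane => w 0) h) (show ¬((5/2:ℝ) = (2)) by norm_num)
  · exact absurd (congrArg (fun w : Plane => w 0) h) (show ¬((5/2:ℝ) = (3/2)) by norm_num)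
  · exact absurd (congrArg (fun w : Plane => w 0) h) (show ¬((5/2:ℝ) = (1)) by norm_num)
  · exact absurd (congrArg (fun w : Plane => w 0) h) (show ¬((5/2:ℝ) = (1/2)) by norm_num)
  · exact absurd (congrArg (fun w : Plane => w 0) h) (show ¬((5/2:ℝ) = (0)) by norm_num)
  · exact absurd (congrArg (fun w : Plane => w 0) h) (show ¬((5/2:ℝ) = (-1)) by norm_num)
  · exact absurd (congrArg (fun w : Plane => w 0) h) (show ¬((2:ℝ) = (-1)) by norm_num)
  · exact absurd (congrArg (fun w : Plane => w 0) h) (show ¬((2:ℝ) = (4)) by norm_num)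
  · exact absurd (congrArg (fun w : Plane => w 0) h) (show ¬((2:ℝ) = (4)) by norm_num)
  · exact absurd (congrArg (fun w : Plane => w 0) h) (show ¬((2:ℝ) = (3)) by norm_num)
  · exact absurd (congrArg (fun w : Plane => w 0) h) (show ¬((2:ℝ) = (5/2)) by norm_num)
  · rfl
  · exact absurd (congrArg (fun w : Plane => w 0) h) (show ¬((2:ℝ) = (3/2)) by norm_num)
  · exact absurd (congrArg (fun w : Plane => w 0) h) (show ¬((2:ℝ) = (1)) by norm_num)
  · exact absurd (congrArg (fun w : Plane => w 0) h) (show ¬((2:ℝ) = (1/2)) by norm_num)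
  · exact absurd (congrArg (fun w : Plane => w 0) h) (show ¬((2:ℝ) = (0)) by norm_num)
  · exact absurd (congrArg (fun w : Plane => w 0) h) (show ¬((2:ℝ) = (-1)) by norm_num)
  · exact absurd (congrArg (fun w : Plane => w 0) h) (show ¬((3/2:ℝ) = (-1)) by norm_num)
  · exact absurd (congrArg (fun w : Plane => w 0) h) (show ¬((3/2:ℝ) = (4)) by norm_num)
  · exact absurd (congrArg (fun w : Plane => w 0) h) (show ¬((3/2:ℝ) = (4)) by norm_num)
  · exact absurd (congrArg (fun w : Plane => w 0) h) (show ¬((3/2:ℝ) = (3)) by norm_num)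
  · exact absurd (congrArg (fun w : Plane => w 0) h) (show ¬((3/2:ℝ) = (5/2)) by norm_num)
  · exact absurd (congrArg (fun w : Plane => w 0) h) (show ¬((3/2:ℝ) = (2)) by norm_num)
  · rfl
  · exact absurd (congrArg (fun w : Plane => w 0) h) (show ¬((3/2:ℝ) = (1)) by norm_num)
  · exact absurd (congrArg (fun w : Plane => w 0) h) (show ¬((3/2:ℝ) = (1/2)) by norm_num)
  · exact absurd (congrArg (fun w : Plane => w 0) h) (show ¬((3/2:ℝ) = (0)) by norm_num)
  · exact absurd (congrArg (fun w : Plane => w 0) h) (show ¬((3/2:ℝ) = (-1)) by norm_num)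
  · exact absurd (congrArg (fun w : Plane => w 0) h) (show ¬((1:ℝ) = (-1)) by norm_num)
  · exact absurd (congrArg (fun w : Plane => w 0) h) (show ¬((1:ℝ) = (4)) by norm_num)
  · exact absurd (congrArg (fun w : Plane => w 0) h) (show ¬((1:ℝ) = (4)) by norm_num)
  · exact absurd (congrArg (fun w : Plane => w 0) h) (show ¬((1:ℝ) = (3)) by norm_num)
  · exact absurd (congrArg (fun w : Plane => w 0) h) (show ¬((1:ℝ) = (5/2)) by norm_num)
  · exact absurd (congrArg (fun w : Plane => w 0) h) (show ¬((1:ℝ) = (2)) by norm_num)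
  · exact absurd (congrArg (fun w : Plane => w 0) h) (show ¬((1:ℝ) = (3/2)) by norm_num)
  · rfl
  · exact absurd (congrArg (fun w : Plane => w 0) h) (show ¬((1:ℝ) = (1/2)) by norm_num)
  · exact absurd (congrArg (fun w : Plane => w 0) h) (show ¬((1:ℝ) = (0)) by norm_num)
  · exact absurd (congrArg (fun w : Plane => w 0) h) (show ¬((1:ℝ) = (-1)) by norm_num)
  · exact absurd (congrArg (fun w : Plane => w 0) h) (show ¬((1/2:ℝ) = (-1)) by norm_num)
  · exact absurd (congrArg (fun w : Plane => w 0) h) (show ¬((1/2:ℝ) = (4)) by norm_num)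
  · exact absurd (congrArg (fun w : Plane => w 0) h) (show ¬((1/2:ℝ) = (4)) by norm_num)
  · exact absurd (congrArg (fun w : Plane => w 0) h) (show ¬((1/2:ℝ) = (3)) by norm_num)
  · exact absurd (congrArg (fun w : Plane => w 0) h) (show ¬((1/2:ℝ) = (5/2)) by norm_num)
  · exact absurd (congrArg (fun w : Plane => w 0) h) (show ¬((1/2:ℝ) = (2)) by norm_num)
  · exact absurd (congrArg (fun w : Plane => w 0) h) (show ¬((1/2:ℝ) = (3/2)) by norm_num)
  · exact absurd (congrArg (fun w : Plane => w 0) h) (show ¬((1/2:ℝ) = (1)) by norm_num)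
  · rfl
  · exact absurd (congrArg (fun w : Plane => w 0) h) (show ¬((1/2:ℝ) = (0)) by norm_num)
  · exact absurd (congrArg (fun w : Plane => w 0) h) (show ¬((1/2:ℝ) = (-1)) by norm_num)
  · exact absurd (congrArg (fun w : Plane => w 0) h) (show ¬((0:ℝ) = (-1)) by norm_num)
  · exact absurd (congrArg (fun w : Plane => w 0) h) (show ¬((0:ℝ) = (4)) by norm_num)
  · exact absurd (congrArg (fun w : Plane => w 0) h) (show ¬((0:ℝ) = (4)) by norm_num)
  · exact absurd (congrArg (fun w : Plane => w 0) h) (show ¬((0:ℝ) = (3)) by norm_num)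
  · exact absurd (congrArg (fun w : Plane => w 0) h) (show ¬((0:ℝ) = (5/2)) by norm_num)
  · exact absurd (congrArg (fun w : Plane => w 0) h) (show ¬((0:ℝ) = (2)) by norm_num)
  · exact absurd (congrArg (fun w : Plane => w 0) h) (show ¬((0:ℝ) = (3/2)) by norm_num)
  · exact absurd (congrArg (fun w : Plane => w 0) h) (show ¬((0:ℝ) = (1)) by norm_num)
  · exact absurd (congrArg (fun w : Plane => w 0) h) (show ¬((0:ℝ) = (1/2)) by norm_num)
  · rfl
  · exact absurd (congrArg (fun w : Plane => w 0) h) (show ¬((0:ℝ) = (-1)) by norm_num)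
  · exact absurd (congrArg (fun w : Plane => w 1) h) (show ¬((0:ℝ) = (-1)) by norm_num)
  · exact absurd (congrArg (fun w : Plane => w 0) h) (show ¬((-1:ℝ) = (4)) by norm_num)
  · exact absurd (congrArg (fun w : Plane => w 0) h) (show ¬((-1:ℝ) = (4)) by norm_num)
  · exact absurd (congrArg (fun w : Plane => w 0) h) (show ¬((-1:ℝ) = (3)) by norm_num)
  · exact absurd (congrArg (fun w : Plane => w 0) h) (show ¬((-1:ℝ) = (5/2)) by norm_num)
  · exact absurd (congrArg (fun w : Plane => w 0) h) (show ¬((-1:ℝ) = (2)) by norm_num)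
  · exact absurd (congrArg (fun w : Plane => w 0) h) (show ¬((-1:ℝ) = (3/2)) by norm_num)
  · exact absurd (congrArg (fun w : Plane => w 0) h) (show ¬((-1:ℝ) = (1)) by norm_num)
  · exact absurd (congrArg (fun w : Plane => w 0) h) (show ¬((-1:ℝ) = (1/2)) by norm_num)
  · exact absurd (congrArg (fun w : Plane => w 0) h) (show ¬((-1:ℝ) = (0)) by norm_num)
  · rfl


/-! ### simplicity of the boundary curve -/

lemma seg_adj {A B C : Plane}
    (hdet : (A 0 - B 0) * (C 1 - B 1) - (A 1 - B 1) * (C 0 - B 0) ≠ 0) :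
    segment ℝ A B ∩ segment ℝ B C = {B} := by
  apply Subset.antisymm
  · rintro z ⟨hz1, hz2⟩
    obtain ⟨t, ht0, ht1, hx1, hy1⟩ := seg_coord hz1
    obtain ⟨s, hs0, hs1, hx2, hy2⟩ := seg_coord hz2
    have e1 : (1 - t) * (A 0 - B 0) - s * (C 0 - B 0) = 0 := by linear_combination hx2 - hx1
    have e2 : (1 - t) * (A 1 - B 1) - s * (C 1 - B 1) = 0 := by linear_combination hy2 - hy1
    have key : (1 - t) * ((A 0 - B 0) * (C 1 - B 1) - (A 1 - B 1) * (C 0 - B 0)) = 0 := by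
      linear_combination (C 1 - B 1) * e1 - (C 0 - B 0) * e2
    have ht' : t = 1 := by
      rcases mul_eq_zero.mp key with h | h
      · linarith
      · exact absurd h hdet
    have hz0 : z 0 = B 0 := by rw [hx1, ht']; ring
    have hz1' : z 1 = B 1 := by rw [hy1, ht']; ring
    have : z = B := by
      ext i
      fin_cases i
      · exact hz0
      · exact hz1'
    rw [this]; rfl
  · intro z hz
    rw [mem_singleton_iff] at hz
    rw [hz]
    exact ⟨right_mem_segment ℝ A B, left_mem_segment ℝ B C⟩

lemma seg_disj_lt {A B C D : Plane} (i : Fin 2)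
    (h1 : A i < C i) (h2 : A i < D i) (h3 : B i < C i) (h4 : B i < D i) :
    Disjoint (segment ℝ A B) (segment ℝ C D) := by
  rw [Set.disjoint_left]
  rintro z hz1 hz2
  obtain ⟨u, v, hu, hv, huv, rfl⟩ := hz1
  obtain ⟨u', v', hu', hv', hu'v', he⟩ := hz2
  have e3 : u' * C i + v' * D i = u * A i + v * B i := congrArg (fun w : Plane => w i) he
  set c := max (A i) (B i) with hc
  have hzc : u * A i + v * B i ≤ c := by
    have k1 := mul_le_mul_of_nonneg_left (le_max_left (A i) (B i)) hu
    have k2 := mul_le_mul_of_nonneg_left (le_max_right (A i) (B i)) hv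
    have k3 : u * c + v * c = c := by linear_combination c * huv
    linarith
  have hzc' : min (C i) (D i) ≤ u' * C i + v' * D i := by
    have k1 := mul_le_mul_of_nonneg_left (min_le_left (C i) (D i)) hu'
    have k2 := mul_le_mul_of_nonneg_left (min_le_right (C i) (D i)) hv'
    have k3 : u' * min (C i) (D i) + v' * min (C i) (D i) = min (C i) (D i) := by
      linear_combination (min (C i) (D i)) * hu'v'
    linarith
  have hlt : c < min (C i) (D i) := max_lt (lt_min h1 h2) (lt_min h3 h4)
  linarith

lemma vert_adj : ∀ i : ZMod 11, segment ℝ (vert i) (vert (i+1)) ∩ segment ℝ (vert (i+1)) (vert (i+2)) = {vert (i+1)} := by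
  intro i
  rcases zmod11_cases i with rfl|rfl|rfl|rfl|rfl|rfl|rfl|rfl|rfl|rfl|rfl
  · exact seg_adj (show ¬(((-1) - (4)) * ((0) - (-1)) - ((-1) - (-1)) * ((4) - (4)) = 0) by norm_num)
  · exact seg_adj (show ¬(((4) - (4)) * ((0) - (0)) - ((-1) - (0)) * ((3) - (4)) = 0) by norm_num)
  · exact seg_adj (show ¬(((4) - (3)) * ((rt3/2) - (0)) - ((0) - (0)) * ((5/2) - (3)) = 0) by intro hE; nlinarith [rt3_pos])
  · exact seg_adj (show ¬(((3) - (5/2)) * ((0) - (rt3/2)) - ((0) - (rt3/2)) * ((2) - (5/2)) = 0) by intro hE; nlinarith [rt3_pos])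
  · exact seg_adj (show ¬(((5/2) - (2)) * ((rt3/2) - (0)) - ((rt3/2) - (0)) * ((3/2) - (2)) = 0) by intro hE; nlinarith [rt3_pos])
  · exact seg_adj (show ¬(((2) - (3/2)) * ((0) - (rt3/2)) - ((0) - (rt3/2)) * ((1) - (3/2)) = 0) by intro hE; nlinarith [rt3_pos])
  · exact seg_adj (show ¬(((3/2) - (1)) * ((rt3/2) - (0)) - ((rt3/2) - (0)) * ((1/2) - (1)) = 0) by intro hE; nlinarith [rt3_pos])
  · exact seg_adj (show ¬(((1) - (1/2)) * ((0) - (rt3/2)) - ((0) - (rt3/2)) * ((0) - (1/2)) = 0) by intro hE; nlinarith [rt3_pos])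
  · exact seg_adj (show ¬(((1/2) - (0)) * ((0) - (0)) - ((rt3/2) - (0)) * ((-1) - (0)) = 0) by intro hE; nlinarith [rt3_pos])
  · exact seg_adj (show ¬(((0) - (-1)) * ((-1) - (0)) - ((0) - (0)) * ((-1) - (-1)) = 0) by norm_num)
  · exact seg_adj (show ¬(((-1) - (-1)) * ((-1) - (-1)) - ((0) - (-1)) * ((4) - (-1)) = 0) by norm_num)

lemma vert_disj : ∀ i j : ZMod 11, i ≠ j → i + 1 ≠ j → j + 1 ≠ i →
    Disjoint (segment ℝ (vert i) (vert (i+1))) (segment ℝ (vert j) (vert (j+1))) := by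
  intro i j h1 h2 h3
  rcases zmod11_cases i with rfl|rfl|rfl|rfl|rfl|rfl|rfl|rfl|rfl|rfl|rfl <;>
    rcases zmod11_cases j with rfl|rfl|rfl|rfl|rfl|rfl|rfl|rfl|rfl|rfl|rfl
  · exact absurd rfl h1
  · exact absurd (by decide) h2
  · exact seg_disj_lt 1 (show ((-1):ℝ) < (0) by norm_num) (show ((-1):ℝ) < (0) by norm_num) (show ((-1):ℝ) < (0) by norm_num) (show ((-1):ℝ) < (0) by norm_num)
  · exact seg_disj_lt 1 (show ((-1):ℝ) < (0) by norm_num) (show ((-1):ℝ) < (rt3/2) by nlinarith [rt3_gt, rt3_lt]) (show ((-1):ℝ) < (0) by norm_num) (show ((-1):ℝ) < (rt3/2) by nlinarith [rt3_gt, rt3_lt])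
  · exact seg_disj_lt 1 (show ((-1):ℝ) < (rt3/2) by nlinarith [rt3_gt, rt3_lt]) (show ((-1):ℝ) < (0) by norm_num) (show ((-1):ℝ) < (rt3/2) by nlinarith [rt3_gt, rt3_lt]) (show ((-1):ℝ) < (0) by norm_num)
  · exact seg_disj_lt 1 (show ((-1):ℝ) < (0) by norm_num) (show ((-1):ℝ) < (rt3/2) by nlinarith [rt3_gt, rt3_lt]) (show ((-1):ℝ) < (0) by norm_num) (show ((-1):ℝ) < (rt3/2) by nlinarith [rt3_gt, rt3_lt])
  · exact seg_disj_lt 1 (show ((-1):ℝ) < (rt3/2) by nlinarith [rt3_gt, rt3_lt]) (show ((-1):ℝ) < (0) by norm_num) (show ((-1):ℝ) < (rt3/2) by nlinarith [rt3_gt, rt3_lt]) (show ((-1):ℝ) < (0) by norm_num)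
  · exact seg_disj_lt 1 (show ((-1):ℝ) < (0) by norm_num) (show ((-1):ℝ) < (rt3/2) by nlinarith [rt3_gt, rt3_lt]) (show ((-1):ℝ) < (0) by norm_num) (show ((-1):ℝ) < (rt3/2) by nlinarith [rt3_gt, rt3_lt])
  · exact seg_disj_lt 1 (show ((-1):ℝ) < (rt3/2) by nlinarith [rt3_gt, rt3_lt]) (show ((-1):ℝ) < (0) by norm_num) (show ((-1):ℝ) < (rt3/2) by nlinarith [rt3_gt, rt3_lt]) (show ((-1):ℝ) < (0) by norm_num)
  · exact seg_disj_lt 1 (show ((-1):ℝ) < (0) by norm_num) (show ((-1):ℝ) < (0) by norm_num) (show ((-1):ℝ) < (0) by norm_num) (show ((-1):ℝ) < (0) by norm_num)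
  · exact absurd (by decide) h3
  · exact absurd (by decide) h3
  · exact absurd rfl h1
  · exact absurd (by decide) h2
  · exact (seg_disj_lt 0 (show ((3):ℝ) < (4) by norm_num) (show ((3):ℝ) < (4) by norm_num) (show ((5/2):ℝ) < (4) by norm_num) (show ((5/2):ℝ) < (4) by norm_num)).symm
  · exact (seg_disj_lt 0 (show ((5/2):ℝ) < (4) by norm_num) (show ((5/2):ℝ) < (4) by norm_num) (show ((2):ℝ) < (4) by norm_num) (show ((2):ℝ) < (4) by norm_num)).symm
  · exact (seg_disj_lt 0 (show ((2):ℝ) < (4) by norm_num) (show ((2):ℝ) < (4) by norm_num) (show ((3/2):ℝ) < (4) by norm_num) (show ((3/2):ℝ) < (4) by norm_num)).symm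
  · exact (seg_disj_lt 0 (show ((3/2):ℝ) < (4) by norm_num) (show ((3/2):ℝ) < (4) by norm_num) (show ((1):ℝ) < (4) by norm_num) (show ((1):ℝ) < (4) by norm_num)).symm
  · exact (seg_disj_lt 0 (show ((1):ℝ) < (4) by norm_num) (show ((1):ℝ) < (4) by norm_num) (show ((1/2):ℝ) < (4) by norm_num) (show ((1/2):ℝ) < (4) by norm_num)).symm
  · exact (seg_disj_lt 0 (show ((1/2):ℝ) < (4) by norm_num) (show ((1/2):ℝ) < (4) by norm_num) (show ((0):ℝ) < (4) by norm_num) (show ((0):ℝ) < (4) by norm_num)).symm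
  · exact (seg_disj_lt 0 (show ((0):ℝ) < (4) by norm_num) (show ((0):ℝ) < (4) by norm_num) (show ((-1):ℝ) < (4) by norm_num) (show ((-1):ℝ) < (4) by norm_num)).symm
  · exact (seg_disj_lt 0 (show ((-1):ℝ) < (4) by norm_num) (show ((-1):ℝ) < (4) by norm_num) (show ((-1):ℝ) < (4) by norm_num) (show ((-1):ℝ) < (4) by norm_num)).symm
  · exact (seg_disj_lt 1 (show ((-1):ℝ) < (0) by norm_num) (show ((-1):ℝ) < (0) by norm_num) (show ((-1):ℝ) < (0) by norm_num) (show ((-1):ℝ) < (0) by norm_num)).symm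
  · exact absurd (by decide) h3
  · exact absurd rfl h1
  · exact absurd (by decide) h2
  · exact (seg_disj_lt 0 (show ((5/2):ℝ) < (4) by norm_num) (show ((5/2):ℝ) < (3) by norm_num) (show ((2):ℝ) < (4) by norm_num) (show ((2):ℝ) < (3) by norm_num)).symm
  · exact (seg_disj_lt 0 (show ((2):ℝ) < (4) by norm_num) (show ((2):ℝ) < (3) by norm_num) (show ((3/2):ℝ) < (4) by norm_num) (show ((3/2):ℝ) < (3) by norm_num)).symm
  · exact (seg_disj_lt 0 (show ((3/2):ℝ) < (4) by norm_num) (show ((3/2):ℝ) < (3) by norm_num) (show ((1):ℝ) < (4) by norm_num) (show ((1):ℝ) < (3) by norm_num)).symm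
  · exact (seg_disj_lt 0 (show ((1):ℝ) < (4) by norm_num) (show ((1):ℝ) < (3) by norm_num) (show ((1/2):ℝ) < (4) by norm_num) (show ((1/2):ℝ) < (3) by norm_num)).symm
  · exact (seg_disj_lt 0 (show ((1/2):ℝ) < (4) by norm_num) (show ((1/2):ℝ) < (3) by norm_num) (show ((0):ℝ) < (4) by norm_num) (show ((0):ℝ) < (3) by norm_num)).symm
  · exact (seg_disj_lt 0 (show ((0):ℝ) < (4) by norm_num) (show ((0):ℝ) < (3) by norm_num) (show ((-1):ℝ) < (4) by norm_num) (show ((-1):ℝ) < (3) by norm_num)).symm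
  · exact (seg_disj_lt 0 (show ((-1):ℝ) < (4) by norm_num) (show ((-1):ℝ) < (3) by norm_num) (show ((-1):ℝ) < (4) by norm_num) (show ((-1):ℝ) < (3) by norm_num)).symm
  · exact (seg_disj_lt 1 (show ((-1):ℝ) < (0) by norm_num) (show ((-1):ℝ) < (rt3/2) by nlinarith [rt3_gt, rt3_lt]) (show ((-1):ℝ) < (0) by norm_num) (show ((-1):ℝ) < (rt3/2) by nlinarith [rt3_gt, rt3_lt])).symm
  · exact seg_disj_lt 0 (show ((3):ℝ) < (4) by norm_num) (show ((3):ℝ) < (4) by norm_num) (show ((5/2):ℝ) < (4) by norm_num) (show ((5/2):ℝ) < (4) by norm_num)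
  · exact absurd (by decide) h3
  · exact absurd rfl h1
  · exact absurd (by decide) h2
  · exact (seg_disj_lt 0 (show ((2):ℝ) < (3) by norm_num) (show ((2):ℝ) < (5/2) by norm_num) (show ((3/2):ℝ) < (3) by norm_num) (show ((3/2):ℝ) < (5/2) by norm_num)).symm
  · exact (seg_disj_lt 0 (show ((3/2):ℝ) < (3) by norm_num) (show ((3/2):ℝ) < (5/2) by norm_num) (show ((1):ℝ) < (3) by norm_num) (show ((1):ℝ) < (5/2) by norm_num)).symm
  · exact (seg_disj_lt 0 (show ((1):ℝ) < (3) by norm_num) (show ((1):ℝ) < (5/2) by norm_num) (show ((1/2):ℝ) < (3) by norm_num) (show ((1/2):ℝ) < (5/2) by norm_num)).symm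
  · exact (seg_disj_lt 0 (show ((1/2):ℝ) < (3) by norm_num) (show ((1/2):ℝ) < (5/2) by norm_num) (show ((0):ℝ) < (3) by norm_num) (show ((0):ℝ) < (5/2) by norm_num)).symm
  · exact (seg_disj_lt 0 (show ((0):ℝ) < (3) by norm_num) (show ((0):ℝ) < (5/2) by norm_num) (show ((-1):ℝ) < (3) by norm_num) (show ((-1):ℝ) < (5/2) by norm_num)).symm
  · exact (seg_disj_lt 0 (show ((-1):ℝ) < (3) by norm_num) (show ((-1):ℝ) < (5/2) by norm_num) (show ((-1):ℝ) < (3) by norm_num) (show ((-1):ℝ) < (5/2) by norm_num)).symm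
  · exact (seg_disj_lt 1 (show ((-1):ℝ) < (rt3/2) by nlinarith [rt3_gt, rt3_lt]) (show ((-1):ℝ) < (0) by norm_num) (show ((-1):ℝ) < (rt3/2) by nlinarith [rt3_gt, rt3_lt]) (show ((-1):ℝ) < (0) by norm_num)).symm
  · exact seg_disj_lt 0 (show ((5/2):ℝ) < (4) by norm_num) (show ((5/2):ℝ) < (4) by norm_num) (show ((2):ℝ) < (4) by norm_num) (show ((2):ℝ) < (4) by norm_num)
  · exact seg_disj_lt 0 (show ((5/2):ℝ) < (4) by norm_num) (show ((5/2):ℝ) < (3) by norm_num) (show ((2):ℝ) < (4) by norm_num) (show ((2):ℝ) < (3) by norm_num)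
  · exact absurd (by decide) h3
  · exact absurd rfl h1
  · exact absurd (by decide) h2
  · exact (seg_disj_lt 0 (show ((3/2):ℝ) < (5/2) by norm_num) (show ((3/2):ℝ) < (2) by norm_num) (show ((1):ℝ) < (5/2) by norm_num) (show ((1):ℝ) < (2) by norm_num)).symm
  · exact (seg_disj_lt 0 (show ((1):ℝ) < (5/2) by norm_num) (show ((1):ℝ) < (2) by norm_num) (show ((1/2):ℝ) < (5/2) by norm_num) (show ((1/2):ℝ) < (2) by norm_num)).symm
  · exact (seg_disj_lt 0 (show ((1/2):ℝ) < (5/2) by norm_num) (show ((1/2):ℝ) < (2) by norm_num) (show ((0):ℝ) < (5/2) by norm_num) (show ((0):ℝ) < (2) by norm_num)).symm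
  · exact (seg_disj_lt 0 (show ((0):ℝ) < (5/2) by norm_num) (show ((0):ℝ) < (2) by norm_num) (show ((-1):ℝ) < (5/2) by norm_num) (show ((-1):ℝ) < (2) by norm_num)).symm
  · exact (seg_disj_lt 0 (show ((-1):ℝ) < (5/2) by norm_num) (show ((-1):ℝ) < (2) by norm_num) (show ((-1):ℝ) < (5/2) by norm_num) (show ((-1):ℝ) < (2) by norm_num)).symm
  · exact (seg_disj_lt 1 (show ((-1):ℝ) < (0) by norm_num) (show ((-1):ℝ) < (rt3/2) by nlinarith [rt3_gt, rt3_lt]) (show ((-1):ℝ) < (0) by norm_num) (show ((-1):ℝ) < (rt3/2) by nlinarith [rt3_gt, rt3_lt])).symm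
  · exact seg_disj_lt 0 (show ((2):ℝ) < (4) by norm_num) (show ((2):ℝ) < (4) by norm_num) (show ((3/2):ℝ) < (4) by norm_num) (show ((3/2):ℝ) < (4) by norm_num)
  · exact seg_disj_lt 0 (show ((2):ℝ) < (4) by norm_num) (show ((2):ℝ) < (3) by norm_num) (show ((3/2):ℝ) < (4) by norm_num) (show ((3/2):ℝ) < (3) by norm_num)
  · exact seg_disj_lt 0 (show ((2):ℝ) < (3) by norm_num) (show ((2):ℝ) < (5/2) by norm_num) (show ((3/2):ℝ) < (3) by norm_num) (show ((3/2):ℝ) < (5/2) by norm_num)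
  · exact absurd (by decide) h3
  · exact absurd rfl h1
  · exact absurd (by decide) h2
  · exact (seg_disj_lt 0 (show ((1):ℝ) < (2) by norm_num) (show ((1):ℝ) < (3/2) by norm_num) (show ((1/2):ℝ) < (2) by norm_num) (show ((1/2):ℝ) < (3/2) by norm_num)).symm
  · exact (seg_disj_lt 0 (show ((1/2):ℝ) < (2) by norm_num) (show ((1/2):ℝ) < (3/2) by norm_num) (show ((0):ℝ) < (2) by norm_num) (show ((0):ℝ) < (3/2) by norm_num)).symm
  · exact (seg_disj_lt 0 (show ((0):ℝ) < (2) by norm_num) (show ((0):ℝ) < (3/2) by norm_num) (show ((-1):ℝ) < (2) by norm_num) (show ((-1):ℝ) < (3/2) by norm_num)).symm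
  · exact (seg_disj_lt 0 (show ((-1):ℝ) < (2) by norm_num) (show ((-1):ℝ) < (3/2) by norm_num) (show ((-1):ℝ) < (2) by norm_num) (show ((-1):ℝ) < (3/2) by norm_num)).symm
  · exact (seg_disj_lt 1 (show ((-1):ℝ) < (rt3/2) by nlinarith [rt3_gt, rt3_lt]) (show ((-1):ℝ) < (0) by norm_num) (show ((-1):ℝ) < (rt3/2) by nlinarith [rt3_gt, rt3_lt]) (show ((-1):ℝ) < (0) by norm_num)).symm
  · exact seg_disj_lt 0 (show ((3/2):ℝ) < (4) by norm_num) (show ((3/2):ℝ) < (4) by norm_num) (show ((1):ℝ) < (4) by norm_num) (show ((1):ℝ) < (4) by norm_num)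
  · exact seg_disj_lt 0 (show ((3/2):ℝ) < (4) by norm_num) (show ((3/2):ℝ) < (3) by norm_num) (show ((1):ℝ) < (4) by norm_num) (show ((1):ℝ) < (3) by norm_num)
  · exact seg_disj_lt 0 (show ((3/2):ℝ) < (3) by norm_num) (show ((3/2):ℝ) < (5/2) by norm_num) (show ((1):ℝ) < (3) by norm_num) (show ((1):ℝ) < (5/2) by norm_num)
  · exact seg_disj_lt 0 (show ((3/2):ℝ) < (5/2) by norm_num) (show ((3/2):ℝ) < (2) by norm_num) (show ((1):ℝ) < (5/2) by norm_num) (show ((1):ℝ) < (2) by norm_num)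
  · exact absurd (by decide) h3
  · exact absurd rfl h1
  · exact absurd (by decide) h2
  · exact (seg_disj_lt 0 (show ((1/2):ℝ) < (3/2) by norm_num) (show ((1/2):ℝ) < (1) by norm_num) (show ((0):ℝ) < (3/2) by norm_num) (show ((0):ℝ) < (1) by norm_num)).symm
  · exact (seg_disj_lt 0 (show ((0):ℝ) < (3/2) by norm_num) (show ((0):ℝ) < (1) by norm_num) (show ((-1):ℝ) < (3/2) by norm_num) (show ((-1):ℝ) < (1) by norm_num)).symm
  · exact (seg_disj_lt 0 (show ((-1):ℝ) < (3/2) by norm_num) (show ((-1):ℝ) < (1) by norm_num) (show ((-1):ℝ) < (3/2) by norm_num) (show ((-1):ℝ) < (1) by norm_num)).symm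
  · exact (seg_disj_lt 1 (show ((-1):ℝ) < (0) by norm_num) (show ((-1):ℝ) < (rt3/2) by nlinarith [rt3_gt, rt3_lt]) (show ((-1):ℝ) < (0) by norm_num) (show ((-1):ℝ) < (rt3/2) by nlinarith [rt3_gt, rt3_lt])).symm
  · exact seg_disj_lt 0 (show ((1):ℝ) < (4) by norm_num) (show ((1):ℝ) < (4) by norm_num) (show ((1/2):ℝ) < (4) by norm_num) (show ((1/2):ℝ) < (4) by norm_num)
  · exact seg_disj_lt 0 (show ((1):ℝ) < (4) by norm_num) (show ((1):ℝ) < (3) by norm_num) (show ((1/2):ℝ) < (4) by norm_num) (show ((1/2):ℝ) < (3) by norm_num)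
  · exact seg_disj_lt 0 (show ((1):ℝ) < (3) by norm_num) (show ((1):ℝ) < (5/2) by norm_num) (show ((1/2):ℝ) < (3) by norm_num) (show ((1/2):ℝ) < (5/2) by norm_num)
  · exact seg_disj_lt 0 (show ((1):ℝ) < (5/2) by norm_num) (show ((1):ℝ) < (2) by norm_num) (show ((1/2):ℝ) < (5/2) by norm_num) (show ((1/2):ℝ) < (2) by norm_num)
  · exact seg_disj_lt 0 (show ((1):ℝ) < (2) by norm_num) (show ((1):ℝ) < (3/2) by norm_num) (show ((1/2):ℝ) < (2) by norm_num) (show ((1/2):ℝ) < (3/2) by norm_num)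
  · exact absurd (by decide) h3
  · exact absurd rfl h1
  · exact absurd (by decide) h2
  · exact (seg_disj_lt 0 (show ((0):ℝ) < (1) by norm_num) (show ((0):ℝ) < (1/2) by norm_num) (show ((-1):ℝ) < (1) by norm_num) (show ((-1):ℝ) < (1/2) by norm_num)).symm
  · exact (seg_disj_lt 0 (show ((-1):ℝ) < (1) by norm_num) (show ((-1):ℝ) < (1/2) by norm_num) (show ((-1):ℝ) < (1) by norm_num) (show ((-1):ℝ) < (1/2) by norm_num)).symm
  · exact (seg_disj_lt 1 (show ((-1):ℝ) < (rt3/2) by nlinarith [rt3_gt, rt3_lt]) (show ((-1):ℝ) < (0) by norm_num) (show ((-1):ℝ) < (rt3/2) by nlinarith [rt3_gt, rt3_lt]) (show ((-1):ℝ) < (0) by norm_num)).symm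
  · exact seg_disj_lt 0 (show ((1/2):ℝ) < (4) by norm_num) (show ((1/2):ℝ) < (4) by norm_num) (show ((0):ℝ) < (4) by norm_num) (show ((0):ℝ) < (4) by norm_num)
  · exact seg_disj_lt 0 (show ((1/2):ℝ) < (4) by norm_num) (show ((1/2):ℝ) < (3) by norm_num) (show ((0):ℝ) < (4) by norm_num) (show ((0):ℝ) < (3) by norm_num)
  · exact seg_disj_lt 0 (show ((1/2):ℝ) < (3) by norm_num) (show ((1/2):ℝ) < (5/2) by norm_num) (show ((0):ℝ) < (3) by norm_num) (show ((0):ℝ) < (5/2) by norm_num)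
  · exact seg_disj_lt 0 (show ((1/2):ℝ) < (5/2) by norm_num) (show ((1/2):ℝ) < (2) by norm_num) (show ((0):ℝ) < (5/2) by norm_num) (show ((0):ℝ) < (2) by norm_num)
  · exact seg_disj_lt 0 (show ((1/2):ℝ) < (2) by norm_num) (show ((1/2):ℝ) < (3/2) by norm_num) (show ((0):ℝ) < (2) by norm_num) (show ((0):ℝ) < (3/2) by norm_num)
  · exact seg_disj_lt 0 (show ((1/2):ℝ) < (3/2) by norm_num) (show ((1/2):ℝ) < (1) by norm_num) (show ((0):ℝ) < (3/2) by norm_num) (show ((0):ℝ) < (1) by norm_num)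
  · exact absurd (by decide) h3
  · exact absurd rfl h1
  · exact absurd (by decide) h2
  · exact (seg_disj_lt 0 (show ((-1):ℝ) < (1/2) by norm_num) (show ((-1):ℝ) < (0) by norm_num) (show ((-1):ℝ) < (1/2) by norm_num) (show ((-1):ℝ) < (0) by norm_num)).symm
  · exact (seg_disj_lt 1 (show ((-1):ℝ) < (0) by norm_num) (show ((-1):ℝ) < (0) by norm_num) (show ((-1):ℝ) < (0) by norm_num) (show ((-1):ℝ) < (0) by norm_num)).symm
  · exact seg_disj_lt 0 (show ((0):ℝ) < (4) by norm_num) (show ((0):ℝ) < (4) by norm_num) (show ((-1):ℝ) < (4) by norm_num) (show ((-1):ℝ) < (4) by norm_num)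
  · exact seg_disj_lt 0 (show ((0):ℝ) < (4) by norm_num) (show ((0):ℝ) < (3) by norm_num) (show ((-1):ℝ) < (4) by norm_num) (show ((-1):ℝ) < (3) by norm_num)
  · exact seg_disj_lt 0 (show ((0):ℝ) < (3) by norm_num) (show ((0):ℝ) < (5/2) by norm_num) (show ((-1):ℝ) < (3) by norm_num) (show ((-1):ℝ) < (5/2) by norm_num)
  · exact seg_disj_lt 0 (show ((0):ℝ) < (5/2) by norm_num) (show ((0):ℝ) < (2) by norm_num) (show ((-1):ℝ) < (5/2) by norm_num) (show ((-1):ℝ) < (2) by norm_num)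
  · exact seg_disj_lt 0 (show ((0):ℝ) < (2) by norm_num) (show ((0):ℝ) < (3/2) by norm_num) (show ((-1):ℝ) < (2) by norm_num) (show ((-1):ℝ) < (3/2) by norm_num)
  · exact seg_disj_lt 0 (show ((0):ℝ) < (3/2) by norm_num) (show ((0):ℝ) < (1) by norm_num) (show ((-1):ℝ) < (3/2) by norm_num) (show ((-1):ℝ) < (1) by norm_num)
  · exact seg_disj_lt 0 (show ((0):ℝ) < (1) by norm_num) (show ((0):ℝ) < (1/2) by norm_num) (show ((-1):ℝ) < (1) by norm_num) (show ((-1):ℝ) < (1/2) by norm_num)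
  · exact absurd (by decide) h3
  · exact absurd rfl h1
  · exact absurd (by decide) h2
  · exact absurd (by decide) h2
  · exact seg_disj_lt 0 (show ((-1):ℝ) < (4) by norm_num) (show ((-1):ℝ) < (4) by norm_num) (show ((-1):ℝ) < (4) by norm_num) (show ((-1):ℝ) < (4) by norm_num)
  · exact seg_disj_lt 0 (show ((-1):ℝ) < (4) by norm_num) (show ((-1):ℝ) < (3) by norm_num) (show ((-1):ℝ) < (4) by norm_num) (show ((-1):ℝ) < (3) by norm_num)
  · exact seg_disj_lt 0 (show ((-1):ℝ) < (3) by norm_num) (show ((-1):ℝ) < (5/2) by norm_num) (show ((-1):ℝ) < (3) by norm_num) (show ((-1):ℝ) < (5/2) by norm_num)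
  · exact seg_disj_lt 0 (show ((-1):ℝ) < (5/2) by norm_num) (show ((-1):ℝ) < (2) by norm_num) (show ((-1):ℝ) < (5/2) by norm_num) (show ((-1):ℝ) < (2) by norm_num)
  · exact seg_disj_lt 0 (show ((-1):ℝ) < (2) by norm_num) (show ((-1):ℝ) < (3/2) by norm_num) (show ((-1):ℝ) < (2) by norm_num) (show ((-1):ℝ) < (3/2) by norm_num)
  · exact seg_disj_lt 0 (show ((-1):ℝ) < (3/2) by norm_num) (show ((-1):ℝ) < (1) by norm_num) (show ((-1):ℝ) < (3/2) by norm_num) (show ((-1):ℝ) < (1) by norm_num)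
  · exact seg_disj_lt 0 (show ((-1):ℝ) < (1) by norm_num) (show ((-1):ℝ) < (1/2) by norm_num) (show ((-1):ℝ) < (1) by norm_num) (show ((-1):ℝ) < (1/2) by norm_num)
  · exact seg_disj_lt 0 (show ((-1):ℝ) < (1/2) by norm_num) (show ((-1):ℝ) < (0) by norm_num) (show ((-1):ℝ) < (1/2) by norm_num) (show ((-1):ℝ) < (0) by norm_num)
  · exact absurd (by decide) h3
  · exact absurd rfl h1


/-! ### geodesic distance machinery -/



lemma geodesic_ge {C : Set Plane} {p q : Plane} (h : 1 ≤ dist p q) :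
    1 ≤ geodesicDist C p q := by
  refine le_iInf fun γ => le_iInf fun hcont => le_iInf fun h0 => le_iInf fun h1 =>
    le_iInf fun hmaps => ?_
  calc (1:ℝ≥0∞) = ENNReal.ofReal 1 := by simp
  _ ≤ ENNReal.ofReal (dist p q) := ENNReal.ofReal_le_ofReal h
  _ = edist p q := (edist_dist p q).symm
  _ = edist (γ 0) (γ 1) := by rw [h0, h1]
  _ ≤ eVariationOn γ (Icc 0 1) :=
      eVariationOn.edist_le γ (by constructor <;> norm_num) (by constructor <;> norm_num)

lemma lipschitz_affine (p v : Plane) : LipschitzWith ‖v‖₊ (fun t : ℝ => p + t • v) := by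
  apply LipschitzWith.of_dist_le_mul
  intro a b
  have : (p + a • v) - (p + b • v) = (a - b) • v := by
    rw [sub_smul]; abel
  rw [dist_eq_norm, this, norm_smul]
  rw [coe_nnnorm, Real.norm_eq_abs, Real.dist_eq]
  ring_nf
  exact le_refl _

lemma evar_affine (p v : Plane) {a b : ℝ} (hab : a ≤ b) :
    eVariationOn (fun t : ℝ => p + t • v) (Icc a b) ≤ (‖v‖₊ : ℝ≥0∞) * ENNReal.ofReal (b - a) := by
  have h1 : eVariationOn ((fun t : ℝ => p + t • v) ∘ id) (Icc a b) ≤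
      (‖v‖₊ : ℝ≥0∞) * eVariationOn (id : ℝ → ℝ) (Icc a b) :=
    LipschitzOnWith.comp_eVariationOn_le ((lipschitz_affine p v).lipschitzOnWith (s := univ))
      (mapsTo_univ _ _)
  have h2 : eVariationOn (id : ℝ → ℝ) (Icc a b) ≤ ENNReal.ofReal (b - a) := by
    have h3 := MonotoneOn.eVariationOn_le (monotone_id.monotoneOn (Icc a b))
      (left_mem_Icc.mpr hab) (right_mem_Icc.mpr hab)
    rw [inter_self] at h3
    exact h3
  calc eVariationOn (fun t : ℝ => p + t • v) (Icc a b)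
      = eVariationOn ((fun t : ℝ => p + t • v) ∘ id) (Icc a b) := rfl
  _ ≤ (‖v‖₊ : ℝ≥0∞) * eVariationOn (id : ℝ → ℝ) (Icc a b) := h1
  _ ≤ (‖v‖₊ : ℝ≥0∞) * ENNReal.ofReal (b - a) := by
      exact mul_le_mul_right h2 _

lemma geodesic_le_path {C : Set Plane} (p m q : Plane)
    (h1 : segment ℝ p m ⊆ C) (h2 : segment ℝ m q ⊆ C)
    (hd1 : dist p m ≤ 1) (hd2 : dist m q ≤ 1) :
    geodesicDist C p q ≤ 2 := by
  set v1 : Plane := (2:ℝ) • (m - p) with hv1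
  set v2 : Plane := (2:ℝ) • (q - m) with hv2
  set γ : ℝ → Plane := fun t => if t ≤ (1:ℝ)/2 then p + t • v1 else m + (t - 1/2) • v2 with hγ
  have hmid1 : p + ((1:ℝ)/2) • v1 = m := by
    rw [hv1, smul_smul]
    norm_num
  have hcont : Continuous γ := by
    apply Continuous.if_le
    · continuity
    · continuity
    · exact continuous_id
    · exact continuous_const
    · intro x hx
      rw [hx, hmid1]
      simp
  have hγ0 : γ 0 = p := by
    rw [hγ]; norm_num
  have hγ1 : γ 1 = q := by
    rw [hγ]; norm_num
    rw [hv2, smul_smul]; norm_num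
  have hmaps : MapsTo γ (Icc 0 1) C := by
    intro t ⟨ht0, ht1⟩
    by_cases h : t ≤ (1:ℝ)/2
    · have : γ t = p + (t * 2) • (m - p) := by rw [hγ]; simp only [if_pos h, hv1, smul_smul]
      rw [this]
      apply h1
      rw [segment_eq_image']
      exact ⟨t * 2, ⟨by linarith, by linarith⟩, rfl⟩
    · have : γ t = m + ((t - 1/2) * 2) • (q - m) := by
        rw [hγ]; simp only [if_neg h, hv2, smul_smul]
      rw [this]
      apply h2
      rw [segment_eq_image']
      exact ⟨(t - 1/2) * 2, ⟨by linarith [not_le.mp h], by linarith⟩, rfl⟩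
  have key : eVariationOn γ (Icc 0 1) ≤ 2 := by
    have hsplit := eVariationOn.Icc_add_Icc γ (by norm_num : (0:ℝ) ≤ 1/2)
      (by norm_num : (1:ℝ)/2 ≤ 1) (by constructor <;> norm_num : (1:ℝ)/2 ∈ Icc (0:ℝ) 1)
    rw [inter_self] at hsplit
    have e1 : Icc (0:ℝ) 1 ∩ Icc 0 (1/2) = Icc (0:ℝ) (1/2) := by
      rw [Icc_inter_Icc]; norm_num
    have e2 : Icc (0:ℝ) 1 ∩ Icc (1/2) 1 = Icc ((1:ℝ)/2) 1 := by
      rw [Icc_inter_Icc]; norm_num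
    rw [e1, e2] at hsplit
    have hb1 : eVariationOn γ (Icc 0 (1/2)) ≤ ENNReal.ofReal 1 := by
      have heq : EqOn γ (fun t : ℝ => p + t • v1) (Icc 0 (1/2)) := by
        intro t ht
        rw [hγ]; exact if_pos ht.2
      rw [eVariationOn.eq_of_eqOn heq]
      refine le_trans (evar_affine p v1 (by norm_num)) ?_
      rw [← ENNReal.ofReal_coe_nnreal, coe_nnnorm, ← ENNReal.ofReal_mul (norm_nonneg _)]
      apply ENNReal.ofReal_le_ofReal
      have hn : ‖v1‖ = 2 * ‖m - p‖ := by rw [hv1, norm_smul]; norm_num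
      have hd : ‖m - p‖ = dist p m := by rw [dist_eq_norm, norm_sub_rev]
      rw [hn, hd]
      linarith
    have hb2 : eVariationOn γ (Icc (1/2) 1) ≤ ENNReal.ofReal 1 := by
      have heq : EqOn γ (fun t : ℝ => m + (t - 1/2) • v2) (Icc (1/2) 1) := by
        intro t ht
        rcases eq_or_lt_of_le ht.1 with he | hlt
        · rw [hγ]
          show (if t ≤ 1/2 then p + t • v1 else m + (t - 1/2) • v2) = _
          rw [if_pos (le_of_eq he.symm), ← he, hmid1]
          norm_num
        · rw [hγ]
          show (if t ≤ 1/2 then p + t • v1 else m + (t - 1/2) • v2) = _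
          rw [if_neg (not_le.mpr hlt)]
      rw [eVariationOn.eq_of_eqOn heq]
      have haff : (fun t : ℝ => m + (t - 1/2) • v2) = fun t : ℝ => (m + (-(1:ℝ)/2) • v2) + t • v2 := by
        funext t
        rw [sub_smul]
        push_cast
        rw [show (-(1:ℝ)/2) • v2 = -((1/2:ℝ) • v2) by rw [neg_div, neg_smul]]
        abel
      rw [haff]
      refine le_trans (evar_affine _ v2 (by norm_num)) ?_
      rw [← ENNReal.ofReal_coe_nnreal, coe_nnnorm, ← ENNReal.ofReal_mul (norm_nonneg _)]
      apply ENNReal.ofReal_le_ofReal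
      have hn : ‖v2‖ = 2 * ‖q - m‖ := by rw [hv2, norm_smul]; norm_num
      have hd : ‖q - m‖ = dist m q := by rw [dist_eq_norm, norm_sub_rev]
      rw [hn, hd]
      linarith
    calc eVariationOn γ (Icc 0 1) = _ + _ := hsplit.symm
    _ ≤ ENNReal.ofReal 1 + ENNReal.ofReal 1 := add_le_add hb1 hb2
    _ = 2 := by rw [← ENNReal.ofReal_add (by norm_num) (by norm_num)]; norm_num
  calc geodesicDist C p q ≤ eVariationOn γ (Icc 0 1) := by
        refine iInf_le_of_le γ (iInf_le_of_le hcont.continuousOn ?_)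
        exact iInf_le_of_le hγ0 (iInf_le_of_le hγ1 (iInf_le_of_le hmaps le_rfl))
  _ ≤ 2 := key



/-! ### witnesses and visibility -/

def w1 : Plane := pt (1/2) (4/5)
def w2 : Plane := pt (3/2) (4/5)
def w3 : Plane := pt (5/2) (4/5)

lemma w1_mem : w1 ∈ poly := by
  refine tooth0_sub ?_
  rw [mem_tooth]
  simp only [w1, pt0, pt1]
  refine ⟨by norm_num, ?_, ?_⟩ <;> nlinarith [rt3_gt]

lemma w2_mem : w2 ∈ poly := by
  refine tooth1_sub ?_
  rw [mem_tooth]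
  simp only [w2, pt0, pt1]
  refine ⟨by norm_num, ?_, ?_⟩ <;> nlinarith [rt3_gt]

lemma w3_mem : w3 ∈ poly := by
  refine tooth2_sub ?_
  rw [mem_tooth]
  simp only [w3, pt0, pt1]
  refine ⟨by norm_num, ?_, ?_⟩ <;> nlinarith [rt3_gt]

lemma not_in_poly_mouth {q : Plane}
    (hx : q 0 = 0 ∨ q 0 = 1 ∨ q 0 = 2 ∨ q 0 = 3) (hy : 0 < q 1) : q ∉ poly := by
  rintro (hb | hq | hq | hq)
  · exact absurd hb.2.2.2 (not_le.mpr hy)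
  all_goals
    obtain ⟨_, a2, a3⟩ := hq
  all_goals
    rcases hx with h|h|h|h <;> rw [h] at a2 a3 <;> nlinarith [rt3_pos]

lemma nsee_0_1 : ¬ Sees poly (vert 0) w1 := by
  intro hs
  have hz : ((1 - (2/3):ℝ)) • (vert 0) + ((2/3):ℝ) • w1 ∈ segment ℝ (vert 0) w1 :=
    ⟨1 - (2/3), 2/3, by norm_num, by norm_num, by norm_num, rfl⟩
  refine not_in_poly_mouth ?_ ?_ (hs hz)
  · exact Or.inl (show ((1 - (2/3):ℝ)) * (-1) + ((2/3):ℝ) * (1/2) = 0 by norm_num)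
  · show (0:ℝ) < (1 - (2/3):ℝ) * (-1) + ((2/3):ℝ) * (4/5)
    norm_num

lemma nsee_1_1 : ¬ Sees poly (vert 1) w1 := by
  intro hs
  have hz : ((1 - (6/7):ℝ)) • (vert 1) + ((6/7):ℝ) • w1 ∈ segment ℝ (vert 1) w1 :=
    ⟨1 - (6/7), 6/7, by norm_num, by norm_num, by norm_num, rfl⟩
  refine not_in_poly_mouth ?_ ?_ (hs hz)
  · exact Or.inr (Or.inl (show ((1 - (6/7):ℝ)) * (4) + ((6/7):ℝ) * (1/2) = 1 by norm_num))
  · show (0:ℝ) < (1 - (6/7):ℝ) * (-1) + ((6/7):ℝ) * (4/5)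
    norm_num

lemma nsee_2_1 : ¬ Sees poly (vert 2) w1 := by
  intro hs
  have hz : ((1 - (6/7):ℝ)) • (vert 2) + ((6/7):ℝ) • w1 ∈ segment ℝ (vert 2) w1 :=
    ⟨1 - (6/7), 6/7, by norm_num, by norm_num, by norm_num, rfl⟩
  refine not_in_poly_mouth ?_ ?_ (hs hz)
  · exact Or.inr (Or.inl (show ((1 - (6/7):ℝ)) * (4) + ((6/7):ℝ) * (1/2) = 1 by norm_num))
  · show (0:ℝ) < (1 - (6/7):ℝ) * (0) + ((6/7):ℝ) * (4/5)
    norm_num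

lemma nsee_3_1 : ¬ Sees poly (vert 3) w1 := by
  intro hs
  have hz : ((1 - (4/5):ℝ)) • (vert 3) + ((4/5):ℝ) • w1 ∈ segment ℝ (vert 3) w1 :=
    ⟨1 - (4/5), 4/5, by norm_num, by norm_num, by norm_num, rfl⟩
  refine not_in_poly_mouth ?_ ?_ (hs hz)
  · exact Or.inr (Or.inl (show ((1 - (4/5):ℝ)) * (3) + ((4/5):ℝ) * (1/2) = 1 by norm_num))
  · show (0:ℝ) < (1 - (4/5):ℝ) * (0) + ((4/5):ℝ) * (4/5)
    norm_num

lemma nsee_4_1 : ¬ Sees poly (vert 4) w1 := by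
  intro hs
  have hz : ((1 - (3/4):ℝ)) • (vert 4) + ((3/4):ℝ) • w1 ∈ segment ℝ (vert 4) w1 :=
    ⟨1 - (3/4), 3/4, by norm_num, by norm_num, by norm_num, rfl⟩
  refine not_in_poly_mouth ?_ ?_ (hs hz)
  · exact Or.inr (Or.inl (show ((1 - (3/4):ℝ)) * (5/2) + ((3/4):ℝ) * (1/2) = 1 by norm_num))
  · show (0:ℝ) < (1 - (3/4):ℝ) * (rt3/2) + ((3/4):ℝ) * (4/5)
    nlinarith [rt3_gt]

lemma nsee_5_1 : ¬ Sees poly (vert 5) w1 := by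
  intro hs
  have hz : ((1 - (2/3):ℝ)) • (vert 5) + ((2/3):ℝ) • w1 ∈ segment ℝ (vert 5) w1 :=
    ⟨1 - (2/3), 2/3, by norm_num, by norm_num, by norm_num, rfl⟩
  refine not_in_poly_mouth ?_ ?_ (hs hz)
  · exact Or.inr (Or.inl (show ((1 - (2/3):ℝ)) * (2) + ((2/3):ℝ) * (1/2) = 1 by norm_num))
  · show (0:ℝ) < (1 - (2/3):ℝ) * (0) + ((2/3):ℝ) * (4/5)
    norm_num

lemma nsee_6_1 : ¬ Sees poly (vert 6) w1 := by
  intro hs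
  have hz : ((1 - (1/2):ℝ)) • (vert 6) + ((1/2):ℝ) • w1 ∈ segment ℝ (vert 6) w1 :=
    ⟨1 - (1/2), 1/2, by norm_num, by norm_num, by norm_num, rfl⟩
  refine not_in_poly_mouth ?_ ?_ (hs hz)
  · exact Or.inr (Or.inl (show ((1 - (1/2):ℝ)) * (3/2) + ((1/2):ℝ) * (1/2) = 1 by norm_num))
  · show (0:ℝ) < (1 - (1/2):ℝ) * (rt3/2) + ((1/2):ℝ) * (4/5)
    nlinarith [rt3_gt]

lemma nsee_10_1 : ¬ Sees poly (vert 10) w1 := by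
  intro hs
  have hz : ((1 - (2/3):ℝ)) • (vert 10) + ((2/3):ℝ) • w1 ∈ segment ℝ (vert 10) w1 :=
    ⟨1 - (2/3), 2/3, by norm_num, by norm_num, by norm_num, rfl⟩
  refine not_in_poly_mouth ?_ ?_ (hs hz)
  · exact Or.inl (show ((1 - (2/3):ℝ)) * (-1) + ((2/3):ℝ) * (1/2) = 0 by norm_num)
  · show (0:ℝ) < (1 - (2/3):ℝ) * (0) + ((2/3):ℝ) * (4/5)
    norm_num

lemma nsee_0_2 : ¬ Sees poly (vert 0) w2 := by
  intro hs
  have hz : ((1 - (4/5):ℝ)) • (vert 0) + ((4/5):ℝ) • w2 ∈ segment ℝ (vert 0) w2 :=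
    ⟨1 - (4/5), 4/5, by norm_num, by norm_num, by norm_num, rfl⟩
  refine not_in_poly_mouth ?_ ?_ (hs hz)
  · exact Or.inr (Or.inl (show ((1 - (4/5):ℝ)) * (-1) + ((4/5):ℝ) * (3/2) = 1 by norm_num))
  · show (0:ℝ) < (1 - (4/5):ℝ) * (-1) + ((4/5):ℝ) * (4/5)
    norm_num

lemma nsee_1_2 : ¬ Sees poly (vert 1) w2 := by
  intro hs
  have hz : ((1 - (4/5):ℝ)) • (vert 1) + ((4/5):ℝ) • w2 ∈ segment ℝ (vert 1) w2 :=
    ⟨1 - (4/5), 4/5, by norm_num, by norm_num, by norm_num, rfl⟩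
  refine not_in_poly_mouth ?_ ?_ (hs hz)
  · exact Or.inr (Or.inr (Or.inl (show ((1 - (4/5):ℝ)) * (4) + ((4/5):ℝ) * (3/2) = 2 by norm_num)))
  · show (0:ℝ) < (1 - (4/5):ℝ) * (-1) + ((4/5):ℝ) * (4/5)
    norm_num

lemma nsee_2_2 : ¬ Sees poly (vert 2) w2 := by
  intro hs
  have hz : ((1 - (4/5):ℝ)) • (vert 2) + ((4/5):ℝ) • w2 ∈ segment ℝ (vert 2) w2 :=
    ⟨1 - (4/5), 4/5, by norm_num, by norm_num, by norm_num, rfl⟩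
  refine not_in_poly_mouth ?_ ?_ (hs hz)
  · exact Or.inr (Or.inr (Or.inl (show ((1 - (4/5):ℝ)) * (4) + ((4/5):ℝ) * (3/2) = 2 by norm_num)))
  · show (0:ℝ) < (1 - (4/5):ℝ) * (0) + ((4/5):ℝ) * (4/5)
    norm_num

lemma nsee_3_2 : ¬ Sees poly (vert 3) w2 := by
  intro hs
  have hz : ((1 - (2/3):ℝ)) • (vert 3) + ((2/3):ℝ) • w2 ∈ segment ℝ (vert 3) w2 :=
    ⟨1 - (2/3), 2/3, by norm_num, by norm_num, by norm_num, rfl⟩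
  refine not_in_poly_mouth ?_ ?_ (hs hz)
  · exact Or.inr (Or.inr (Or.inl (show ((1 - (2/3):ℝ)) * (3) + ((2/3):ℝ) * (3/2) = 2 by norm_num)))
  · show (0:ℝ) < (1 - (2/3):ℝ) * (0) + ((2/3):ℝ) * (4/5)
    norm_num

lemma nsee_4_2 : ¬ Sees poly (vert 4) w2 := by
  intro hs
  have hz : ((1 - (1/2):ℝ)) • (vert 4) + ((1/2):ℝ) • w2 ∈ segment ℝ (vert 4) w2 :=
    ⟨1 - (1/2), 1/2, by norm_num, by norm_num, by norm_num, rfl⟩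
  refine not_in_poly_mouth ?_ ?_ (hs hz)
  · exact Or.inr (Or.inr (Or.inl (show ((1 - (1/2):ℝ)) * (5/2) + ((1/2):ℝ) * (3/2) = 2 by norm_num)))
  · show (0:ℝ) < (1 - (1/2):ℝ) * (rt3/2) + ((1/2):ℝ) * (4/5)
    nlinarith [rt3_gt]

lemma nsee_8_2 : ¬ Sees poly (vert 8) w2 := by
  intro hs
  have hz : ((1 - (1/2):ℝ)) • (vert 8) + ((1/2):ℝ) • w2 ∈ segment ℝ (vert 8) w2 :=
    ⟨1 - (1/2), 1/2, by norm_num, by norm_num, by norm_num, rfl⟩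
  refine not_in_poly_mouth ?_ ?_ (hs hz)
  · exact Or.inr (Or.inl (show ((1 - (1/2):ℝ)) * (1/2) + ((1/2):ℝ) * (3/2) = 1 by norm_num))
  · show (0:ℝ) < (1 - (1/2):ℝ) * (rt3/2) + ((1/2):ℝ) * (4/5)
    nlinarith [rt3_gt]

lemma nsee_9_2 : ¬ Sees poly (vert 9) w2 := by
  intro hs
  have hz : ((1 - (2/3):ℝ)) • (vert 9) + ((2/3):ℝ) • w2 ∈ segment ℝ (vert 9) w2 :=
    ⟨1 - (2/3), 2/3, by norm_num, by norm_num, by norm_num, rfl⟩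
  refine not_in_poly_mouth ?_ ?_ (hs hz)
  · exact Or.inr (Or.inl (show ((1 - (2/3):ℝ)) * (0) + ((2/3):ℝ) * (3/2) = 1 by norm_num))
  · show (0:ℝ) < (1 - (2/3):ℝ) * (0) + ((2/3):ℝ) * (4/5)
    norm_num

lemma nsee_10_2 : ¬ Sees poly (vert 10) w2 := by
  intro hs
  have hz : ((1 - (4/5):ℝ)) • (vert 10) + ((4/5):ℝ) • w2 ∈ segment ℝ (vert 10) w2 :=
    ⟨1 - (4/5), 4/5, by norm_num, by norm_num, by norm_num, rfl⟩
  refine not_in_poly_mouth ?_ ?_ (hs hz)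
  · exact Or.inr (Or.inl (show ((1 - (4/5):ℝ)) * (-1) + ((4/5):ℝ) * (3/2) = 1 by norm_num))
  · show (0:ℝ) < (1 - (4/5):ℝ) * (0) + ((4/5):ℝ) * (4/5)
    norm_num

lemma nsee_0_3 : ¬ Sees poly (vert 0) w3 := by
  intro hs
  have hz : ((1 - (6/7):ℝ)) • (vert 0) + ((6/7):ℝ) • w3 ∈ segment ℝ (vert 0) w3 :=
    ⟨1 - (6/7), 6/7, by norm_num, by norm_num, by norm_num, rfl⟩
  refine not_in_poly_mouth ?_ ?_ (hs hz)
  · exact Or.inr (Or.inr (Or.inl (show ((1 - (6/7):ℝ)) * (-1) + ((6/7):ℝ) * (5/2) = 2 by norm_num)))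
  · show (0:ℝ) < (1 - (6/7):ℝ) * (-1) + ((6/7):ℝ) * (4/5)
    norm_num

lemma nsee_1_3 : ¬ Sees poly (vert 1) w3 := by
  intro hs
  have hz : ((1 - (2/3):ℝ)) • (vert 1) + ((2/3):ℝ) • w3 ∈ segment ℝ (vert 1) w3 :=
    ⟨1 - (2/3), 2/3, by norm_num, by norm_num, by norm_num, rfl⟩
  refine not_in_poly_mouth ?_ ?_ (hs hz)
  · exact Or.inr (Or.inr (Or.inr (show ((1 - (2/3):ℝ)) * (4) + ((2/3):ℝ) * (5/2) = 3 by norm_num)))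
  · show (0:ℝ) < (1 - (2/3):ℝ) * (-1) + ((2/3):ℝ) * (4/5)
    norm_num

lemma nsee_2_3 : ¬ Sees poly (vert 2) w3 := by
  intro hs
  have hz : ((1 - (2/3):ℝ)) • (vert 2) + ((2/3):ℝ) • w3 ∈ segment ℝ (vert 2) w3 :=
    ⟨1 - (2/3), 2/3, by norm_num, by norm_num, by norm_num, rfl⟩
  refine not_in_poly_mouth ?_ ?_ (hs hz)
  · exact Or.inr (Or.inr (Or.inr (show ((1 - (2/3):ℝ)) * (4) + ((2/3):ℝ) * (5/2) = 3 by norm_num)))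
  · show (0:ℝ) < (1 - (2/3):ℝ) * (0) + ((2/3):ℝ) * (4/5)
    norm_num

lemma nsee_6_3 : ¬ Sees poly (vert 6) w3 := by
  intro hs
  have hz : ((1 - (1/2):ℝ)) • (vert 6) + ((1/2):ℝ) • w3 ∈ segment ℝ (vert 6) w3 :=
    ⟨1 - (1/2), 1/2, by norm_num, by norm_num, by norm_num, rfl⟩
  refine not_in_poly_mouth ?_ ?_ (hs hz)
  · exact Or.inr (Or.inr (Or.inl (show ((1 - (1/2):ℝ)) * (3/2) + ((1/2):ℝ) * (5/2) = 2 by norm_num)))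
  · show (0:ℝ) < (1 - (1/2):ℝ) * (rt3/2) + ((1/2):ℝ) * (4/5)
    nlinarith [rt3_gt]

lemma nsee_7_3 : ¬ Sees poly (vert 7) w3 := by
  intro hs
  have hz : ((1 - (2/3):ℝ)) • (vert 7) + ((2/3):ℝ) • w3 ∈ segment ℝ (vert 7) w3 :=
    ⟨1 - (2/3), 2/3, by norm_num, by norm_num, by norm_num, rfl⟩
  refine not_in_poly_mouth ?_ ?_ (hs hz)
  · exact Or.inr (Or.inr (Or.inl (show ((1 - (2/3):ℝ)) * (1) + ((2/3):ℝ) * (5/2) = 2 by norm_num)))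
  · show (0:ℝ) < (1 - (2/3):ℝ) * (0) + ((2/3):ℝ) * (4/5)
    norm_num

lemma nsee_8_3 : ¬ Sees poly (vert 8) w3 := by
  intro hs
  have hz : ((1 - (3/4):ℝ)) • (vert 8) + ((3/4):ℝ) • w3 ∈ segment ℝ (vert 8) w3 :=
    ⟨1 - (3/4), 3/4, by norm_num, by norm_num, by norm_num, rfl⟩
  refine not_in_poly_mouth ?_ ?_ (hs hz)
  · exact Or.inr (Or.inr (Or.inl (show ((1 - (3/4):ℝ)) * (1/2) + ((3/4):ℝ) * (5/2) = 2 by norm_num)))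
  · show (0:ℝ) < (1 - (3/4):ℝ) * (rt3/2) + ((3/4):ℝ) * (4/5)
    nlinarith [rt3_gt]

lemma nsee_9_3 : ¬ Sees poly (vert 9) w3 := by
  intro hs
  have hz : ((1 - (4/5):ℝ)) • (vert 9) + ((4/5):ℝ) • w3 ∈ segment ℝ (vert 9) w3 :=
    ⟨1 - (4/5), 4/5, by norm_num, by norm_num, by norm_num, rfl⟩
  refine not_in_poly_mouth ?_ ?_ (hs hz)
  · exact Or.inr (Or.inr (Or.inl (show ((1 - (4/5):ℝ)) * (0) + ((4/5):ℝ) * (5/2) = 2 by norm_num)))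
  · show (0:ℝ) < (1 - (4/5):ℝ) * (0) + ((4/5):ℝ) * (4/5)
    norm_num

lemma nsee_10_3 : ¬ Sees poly (vert 10) w3 := by
  intro hs
  have hz : ((1 - (6/7):ℝ)) • (vert 10) + ((6/7):ℝ) • w3 ∈ segment ℝ (vert 10) w3 :=
    ⟨1 - (6/7), 6/7, by norm_num, by norm_num, by norm_num, rfl⟩
  refine not_in_poly_mouth ?_ ?_ (hs hz)
  · exact Or.inr (Or.inr (Or.inl (show ((1 - (6/7):ℝ)) * (-1) + ((6/7):ℝ) * (5/2) = 2 by norm_num)))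
  · show (0:ℝ) < (1 - (6/7):ℝ) * (0) + ((6/7):ℝ) * (4/5)
    norm_num

lemma seer1 {i : ZMod 11} (hs : Sees poly (vert i) w1) :
    vert i = pt 0 0 ∨ vert i = pt 1 0 ∨ vert i = pt (1/2) (rt3/2) := by
  rcases zmod11_cases i with rfl|rfl|rfl|rfl|rfl|rfl|rfl|rfl|rfl|rfl|rfl
  · exact absurd hs nsee_0_1
  · exact absurd hs nsee_1_1
  · exact absurd hs nsee_2_1
  · exact absurd hs nsee_3_1
  · exact absurd hs nsee_4_1
  · exact absurd hs nsee_5_1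
  · exact absurd hs nsee_6_1
  · exact Or.inr (Or.inl rfl)
  · exact Or.inr (Or.inr rfl)
  · exact Or.inl rfl
  · exact absurd hs nsee_10_1

lemma seer2 {i : ZMod 11} (hs : Sees poly (vert i) w2) :
    vert i = pt 1 0 ∨ vert i = pt 2 0 ∨ vert i = pt (3/2) (rt3/2) := by
  rcases zmod11_cases i with rfl|rfl|rfl|rfl|rfl|rfl|rfl|rfl|rfl|rfl|rfl
  · exact absurd hs nsee_0_2
  · exact absurd hs nsee_1_2
  · exact absurd hs nsee_2_2
  · exact absurd hs nsee_3_2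
  · exact absurd hs nsee_4_2
  · exact Or.inr (Or.inl rfl)
  · exact Or.inr (Or.inr rfl)
  · exact Or.inl rfl
  · exact absurd hs nsee_8_2
  · exact absurd hs nsee_9_2
  · exact absurd hs nsee_10_2

lemma seer3 {i : ZMod 11} (hs : Sees poly (vert i) w3) :
    vert i = pt 2 0 ∨ vert i = pt 3 0 ∨ vert i = pt (5/2) (rt3/2) := by
  rcases zmod11_cases i with rfl|rfl|rfl|rfl|rfl|rfl|rfl|rfl|rfl|rfl|rfl
  · exact absurd hs nsee_0_3
  · exact absurd hs nsee_1_3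
  · exact absurd hs nsee_2_3
  · exact Or.inr (Or.inl rfl)
  · exact Or.inr (Or.inr rfl)
  · exact Or.inl rfl
  · exact absurd hs nsee_6_3
  · exact absurd hs nsee_7_3
  · exact absurd hs nsee_8_3
  · exact absurd hs nsee_9_3
  · exact absurd hs nsee_10_3


/-! ### upper bounds on geodesic distances -/

lemma ub_8_6 : geodesicDist poly (pt (1/2) (rt3/2)) (pt (3/2) (rt3/2)) ≤ 2 :=
  geodesic_le_path (pt (1/2) (rt3/2)) (pt 1 0) (pt (3/2) (rt3/2))
    (((convex_tooth 0).segment_subset vmem_tooth8 vmem_tooth7').trans tooth0_sub)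
    (((convex_tooth 1).segment_subset vmem_tooth7 vmem_tooth6).trans tooth1_sub)
    (one_of_sq (by linear_combination (1/4 : ℝ) * rt3_sq))
    (one_of_sq (by linear_combination (1/4 : ℝ) * rt3_sq))

lemma ub_8_7 : geodesicDist poly (pt (1/2) (rt3/2)) (pt 1 0) ≤ 2 :=
  geodesic_le_path (pt (1/2) (rt3/2)) (pt 1 0) (pt 1 0)
    (((convex_tooth 0).segment_subset vmem_tooth8 vmem_tooth7').trans tooth0_sub)
    (by rw [segment_same]; exact singleton_subset_iff.mpr (tooth0_sub vmem_tooth7'))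
    (one_of_sq (by linear_combination (1/4 : ℝ) * rt3_sq))
    (by simp)

lemma ub_8_5 : geodesicDist poly (pt (1/2) (rt3/2)) (pt 2 0) ≤ 2 :=
  geodesic_le_path (pt (1/2) (rt3/2)) (pt 1 0) (pt 2 0)
    (((convex_tooth 0).segment_subset vmem_tooth8 vmem_tooth7').trans tooth0_sub)
    (((convex_tooth 1).segment_subset vmem_tooth7 vmem_tooth5').trans tooth1_sub)
    (one_of_sq (by linear_combination (1/4 : ℝ) * rt3_sq))
    (one_of_sq (by norm_num))

lemma ub_9_6 : geodesicDist poly (pt 0 0) (pt (3/2) (rt3/2)) ≤ 2 :=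
  geodesic_le_path (pt 0 0) (pt 1 0) (pt (3/2) (rt3/2))
    (((convex_tooth 0).segment_subset vmem_tooth9 vmem_tooth7').trans tooth0_sub)
    (((convex_tooth 1).segment_subset vmem_tooth7 vmem_tooth6).trans tooth1_sub)
    (one_of_sq (by norm_num))
    (one_of_sq (by linear_combination (1/4 : ℝ) * rt3_sq))

lemma ub_9_7 : geodesicDist poly (pt 0 0) (pt 1 0) ≤ 2 :=
  geodesic_le_path (pt 0 0) (pt 1 0) (pt 1 0)
    (((convex_tooth 0).segment_subset vmem_tooth9 vmem_tooth7').trans tooth0_sub)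
    (by rw [segment_same]; exact singleton_subset_iff.mpr (tooth0_sub vmem_tooth7'))
    (one_of_sq (by norm_num))
    (by simp)

lemma ub_9_5 : geodesicDist poly (pt 0 0) (pt 2 0) ≤ 2 :=
  geodesic_le_path (pt 0 0) (pt 1 0) (pt 2 0)
    (((convex_tooth 0).segment_subset vmem_tooth9 vmem_tooth7').trans tooth0_sub)
    (((convex_tooth 1).segment_subset vmem_tooth7 vmem_tooth5').trans tooth1_sub)
    (one_of_sq (by norm_num))
    (one_of_sq (by norm_num))

lemma ub_7_6 : geodesicDist poly (pt 1 0) (pt (3/2) (rt3/2)) ≤ 2 :=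
  geodesic_le_path (pt 1 0) (pt 1 0) (pt (3/2) (rt3/2))
    (by rw [segment_same]; exact singleton_subset_iff.mpr (tooth0_sub vmem_tooth7'))
    (((convex_tooth 1).segment_subset vmem_tooth7 vmem_tooth6).trans tooth1_sub)
    (by simp)
    (one_of_sq (by linear_combination (1/4 : ℝ) * rt3_sq))

lemma ub_7_5 : geodesicDist poly (pt 1 0) (pt 2 0) ≤ 2 :=
  geodesic_le_path (pt 1 0) (pt 1 0) (pt 2 0)
    (by rw [segment_same]; exact singleton_subset_iff.mpr (tooth0_sub vmem_tooth7'))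
    (((convex_tooth 1).segment_subset vmem_tooth7 vmem_tooth5').trans tooth1_sub)
    (by simp)
    (one_of_sq (by norm_num))

lemma ub_7_4 : geodesicDist poly (pt 1 0) (pt (5/2) (rt3/2)) ≤ 2 :=
  geodesic_le_path (pt 1 0) (pt 2 0) (pt (5/2) (rt3/2))
    (((convex_tooth 1).segment_subset vmem_tooth7 vmem_tooth5').trans tooth1_sub)
    (((convex_tooth 2).segment_subset vmem_tooth5 vmem_tooth4).trans tooth2_sub)
    (one_of_sq (by norm_num))
    (one_of_sq (by linear_combination (1/4 : ℝ) * rt3_sq))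

lemma ub_7_3 : geodesicDist poly (pt 1 0) (pt 3 0) ≤ 2 :=
  geodesic_le_path (pt 1 0) (pt 2 0) (pt 3 0)
    (((convex_tooth 1).segment_subset vmem_tooth7 vmem_tooth5').trans tooth1_sub)
    (((convex_tooth 2).segment_subset vmem_tooth5 vmem_tooth3).trans tooth2_sub)
    (one_of_sq (by norm_num))
    (one_of_sq (by norm_num))

end DispAux

/-- There is a simple polygon with pairwise geodesic vertex
distance at least `1` such that every vertex guard set contains two distinct
guards at geodesic distance at most `2`. -/
theorem exists_polygon_dispersion_le_two :
    ∃ P : SimplePolygon,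
      (∀ i j : ZMod P.n, i ≠ j →
        1 ≤ geodesicDist P.carrier (P.vertex i) (P.vertex j)) ∧
      ∀ G : Set Plane, P.IsVertexGuardSet G →
        ∃ g ∈ G, ∃ h ∈ G, g ≠ h ∧ geodesicDist P.carrier g h ≤ 2 := by
  classical
  refine ⟨⟨11, by norm_num, DispAux.vert, DispAux.poly, DispAux.isCompact_poly,
    DispAux.isConnected_poly, DispAux.regular_poly, DispAux.frontier_poly.trans rfl,
    DispAux.vert_inj, DispAux.vert_adj, DispAux.vert_disj⟩, ?_, ?_⟩
  · intro i j hij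
    exact DispAux.geodesic_ge (DispAux.vert_dist i j hij)
  · rintro G ⟨hGv, hGsub, hGcov⟩
    obtain ⟨g1, hg1G, hg1s⟩ := hGcov DispAux.w1 DispAux.w1_mem
    obtain ⟨g2, hg2G, hg2s⟩ := hGcov DispAux.w2 DispAux.w2_mem
    obtain ⟨g3, hg3G, hg3s⟩ := hGcov DispAux.w3 DispAux.w3_mem
    obtain ⟨i1, rfl⟩ := hGv hg1G
    obtain ⟨i2, rfl⟩ := hGv hg2G
    obtain ⟨i3, rfl⟩ := hGv hg3G
    by_cases heq : DispAux.vert i1 = DispAux.vert i2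
    · have hb1 : DispAux.vert i1 = DispAux.pt 1 0 := by
        rcases DispAux.seer1 hg1s with h|h|h <;> rcases DispAux.seer2 hg2s with h'|h'|h'
        · exact absurd (congrArg (fun w : Plane => w 0) (h.symm.trans (heq.trans h'))) (show ¬((0:ℝ) = (1)) by norm_num)
        · exact absurd (congrArg (fun w : Plane => w 0) (h.symm.trans (heq.trans h'))) (show ¬((0:ℝ) = (2)) by norm_num)
        · exact absurd (congrArg (fun w : Plane => w 0) (h.symm.trans (heq.trans h'))) (show ¬((0:ℝ) = (3/2)) by norm_num)
        · exact h
        · exact absurd (congrArg (fun w : Plane => w 0) (h.symm.trans (heq.trans h'))) (show ¬((1:ℝ) = (2)) by norm_num)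
        · exact absurd (congrArg (fun w : Plane => w 0) (h.symm.trans (heq.trans h'))) (show ¬((1:ℝ) = (3/2)) by norm_num)
        · exact absurd (congrArg (fun w : Plane => w 0) (h.symm.trans (heq.trans h'))) (show ¬((1/2:ℝ) = (1)) by norm_num)
        · exact absurd (congrArg (fun w : Plane => w 0) (h.symm.trans (heq.trans h'))) (show ¬((1/2:ℝ) = (2)) by norm_num)
        · exact absurd (congrArg (fun w : Plane => w 0) (h.symm.trans (heq.trans h'))) (show ¬((1/2:ℝ) = (3/2)) by norm_num)
      rcases DispAux.seer3 hg3s with h3|h3|h3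
      · refine ⟨DispAux.vert i1, hg1G, DispAux.vert i3, hg3G, ?_, ?_⟩
        · rw [hb1, h3]
          intro hE
          exact absurd (congrArg (fun w : Plane => w 0) hE) (show ¬((1:ℝ) = (2)) by norm_num)
        · rw [hb1, h3]
          exact DispAux.ub_7_5
      · refine ⟨DispAux.vert i1, hg1G, DispAux.vert i3, hg3G, ?_, ?_⟩
        · rw [hb1, h3]
          intro hE
          exact absurd (congrArg (fun w : Plane => w 0) hE) (show ¬((1:ℝ) = (3)) by norm_num)
        · rw [hb1, h3]
          exact DispAux.ub_7_3
      · refine ⟨DispAux.vert i1, hg1G, DispAux.vert i3, hg3G, ?_, ?_⟩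
        · rw [hb1, h3]
          intro hE
          exact absurd (congrArg (fun w : Plane => w 0) hE) (show ¬((1:ℝ) = (5/2)) by norm_num)
        · rw [hb1, h3]
          exact DispAux.ub_7_4
    · refine ⟨DispAux.vert i1, hg1G, DispAux.vert i2, hg2G, heq, ?_⟩
      rcases DispAux.seer1 hg1s with h|h|h <;> rcases DispAux.seer2 hg2s with h'|h'|h'
      · rw [h, h']
        exact DispAux.ub_9_7
      · rw [h, h']
        exact DispAux.ub_9_5
      · rw [h, h']
        exact DispAux.ub_9_6
      · exact absurd (h.trans h'.symm) heq
      · rw [h, h']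
        exact DispAux.ub_7_5
      · rw [h, h']
        exact DispAux.ub_7_6
      · rw [h, h']
        exact DispAux.ub_8_7
      · rw [h, h']
        exact DispAux.ub_8_5
      · rw [h, h']
        exact DispAux.ub_8_6
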